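/- arXiv:2507.23706 — 2 statements merged into one kernel-verified Lean document; each statement's English description precedes it below -/
import Mathlib

section
/- Let A > 1 be an integer. The random variable ℓ_w/ℓ_p on Π_A(N) with the uniform measure converges in probability to the constant A + 1: for every ε > 0, |{C ∈ Π_A(N) : |ℓ_w(C)/ℓ_p(C) − (A+1)| > ε}| / π_A(N) → 0 as N → ∞ along even integers. -/
open Filter

namespace Winding

/-- Words of length `n` over the alphabet `{1,…,A}`; the `i`-th letter is `(α i).1 + 1`. -/
abbrev Word (A n : ℕ) : Type := Fin n → Fin A

/-- The `i`-th partial quotient `a_{i+1} ∈ {1,…,A}` of a word. -/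
def letter {A n : ℕ} (α : Word A n) (i : Fin n) : ℕ := (α i).1 + 1

/-- `α` has period `d`: `d` is a positive divisor of `n` and `a_i = a_{i+d}` whenever in range. -/
def HasPeriod {A n : ℕ} (α : Word A n) (d : ℕ) : Prop :=
  0 < d ∧ d ∣ n ∧
    ∀ (i : ℕ) (h : i + d < n),
      α ⟨i, Nat.lt_of_le_of_lt (Nat.le_add_right i d) h⟩ = α ⟨i + d, h⟩

/-- The minimal period of a word. -/
noncomputable def mp {A n : ℕ} (α : Word A n) : ℕ := sInf {d | HasPeriod α d}

/-- A word of even length `n` is primitive if `mp α = n`, or `n/2` is odd and `mp α = n/2`. -/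
def Primitive {A n : ℕ} (α : Word A n) : Prop :=
  mp α = n ∨ (Odd (n / 2) ∧ mp α = n / 2)

/-- Cyclic shift of a word by `s` positions. -/
def shift {A n : ℕ} (s : ℕ) (α : Word A n) : Word A n :=
  fun i => α ⟨(i.1 + s) % n, Nat.mod_lt _ i.pos⟩

/-- Even cyclic shift relation. -/
def ShiftRel (A n : ℕ) (α β : Word A n) : Prop :=
  ∃ s : ℕ, Even s ∧ β = shift s α

/-- Primitive words of length `n`. -/
def PrimWord (A n : ℕ) : Type := {α : Word A n // Primitive α}

instance {A n : ℕ} : Finite (PrimWord A n) := by unfold PrimWord; infer_instance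

/-- `P_n`: equivalence classes of primitive words of length `n` under even cyclic shifts. -/
def GeodClass (A n : ℕ) : Type :=
  Quot (fun α β : PrimWord A n => ShiftRel A n α.1 β.1)

instance {A n : ℕ} : Finite (GeodClass A n) :=
  Finite.of_surjective _ (Quot.mk_surjective)

instance (N : ℕ) : Finite {n : ℕ // n ≤ N ∧ Even n} :=
  Finite.of_injective (fun x => (⟨x.1, Nat.lt_succ_of_le x.2.1⟩ : Fin (N + 1)))
    fun x y h => Subtype.ext (by simpa using congrArg Fin.val h)

/-- `Π_A(N)`: the disjoint union of the `P_n` over even `n ≤ N`. -/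
def Geod (A N : ℕ) : Type := Σ n : {n : ℕ // n ≤ N ∧ Even n}, GeodClass A n.1

instance {A N : ℕ} : Finite (Geod A N) := by unfold Geod; infer_instance

/-- `π_A(N) = |Π_A(N)|`. -/
noncomputable def piA (A N : ℕ) : ℕ := Nat.card (Geod A N)

/-- The winding number `Ψ(α) = a_1 - a_2 + a_3 - ⋯ - a_n`. -/
def winding {A n : ℕ} (α : Word A n) : ℤ :=
  ∑ i : Fin n, (-1) ^ (i : ℕ) * (letter α i : ℤ)

/-- Winding number of a closed geodesic (well defined on classes since `Ψ` is invariant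
under even cyclic shifts; here computed on a choice of representative). -/
noncomputable def windingG {A N : ℕ} (C : Geod A N) : ℤ := winding C.2.out.1

/-- Period length `ℓ_p` of a closed geodesic. -/
def plenG {A N : ℕ} (C : Geod A N) : ℕ := C.1.1

/-- Word length `ℓ_w(α) = 2 ∑ a_i`. -/
def wlen {A n : ℕ} (α : Word A n) : ℕ := 2 * ∑ i : Fin n, letter α i

/-- Word length of a closed geodesic. -/
noncomputable def wlenG {A N : ℕ} (C : Geod A N) : ℕ := wlen C.2.out.1

/-- Value of a finite continued fraction `b_1 + 1/(b_2 + 1/(⋯ + 1/b_k))`. -/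
noncomputable def cfVal : List ℕ → ℝ
  | [] => 0
  | b :: l => b + 1 / cfVal l

/-- The block `l` repeated `m` times. -/
def repBlock (l : List ℕ) : ℕ → List ℕ
  | 0 => []
  | m + 1 => l ++ repBlock l m

/-- Value of the purely periodic continued fraction with repeating block `l`:
the limit of the values of the finite continued fractions obtained by repeating `l`. -/
noncomputable def periodicVal (l : List ℕ) : ℝ :=
  limUnder atTop fun m => cfVal (repBlock l m)

/-- The list of partial quotients of a word. -/
def toList {A n : ℕ} (α : Word A n) : List ℕ := List.ofFn (letter α)

/-- `T^j ᾱ`: the purely periodic continued fraction whose repeating block is the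
cyclic shift of `α` by `j`. -/
noncomputable def Tpow {A n : ℕ} (α : Word A n) (j : ℕ) : ℝ :=
  periodicVal (toList (shift j α))

/-- Geometric length `ℓ_g(α) = 2 ∑_{j=1}^n log (T^j ᾱ)`. -/
noncomputable def glen {A n : ℕ} (α : Word A n) : ℝ :=
  2 * ∑ j : Fin n, Real.log (Tpow α (j.1 + 1))

/-- Geometric length of a closed geodesic. -/
noncomputable def glenG {A N : ℕ} (C : Geod A N) : ℝ := glen C.2.out.1



-- ===================== auxiliary development =====================
section Aux

variable {A n : ℕ}

lemma word_congr (α : Word A n) {x y : ℕ} (hx : x < n) (hy : y < n) (h : x = y) :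
    α ⟨x, hx⟩ = α ⟨y, hy⟩ := by subst h; rfl

lemma shift_shift (s t : ℕ) (α : Word A n) : shift t (shift s α) = shift (s + t) α := by
  funext i
  exact word_congr α _ _ (by rw [Nat.mod_add_mod]; ring_nf)

lemma shift_mod (s : ℕ) (α : Word A n) : shift s α = shift (s % n) α := by
  funext i
  exact word_congr α _ _ (Nat.add_mod_mod _ _ _).symm

lemma shift_zero (α : Word A n) : shift 0 α = α := by
  funext i
  have h : (i.1 + 0) % n = i.1 := by simpa using Nat.mod_eq_of_lt i.2
  exact (word_congr α (Nat.mod_lt _ i.pos) i.2 h).trans (congrArg α (Fin.eta i i.2))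

lemma even_mod {s : ℕ} (hs : Even s) (hn : Even n) : Even (s % n) := by
  obtain ⟨a, rfl⟩ := hs
  obtain ⟨b, rfl⟩ := hn
  rw [← two_mul, ← two_mul, Nat.mul_mod_mul_left]
  exact ⟨a % b, two_mul _⟩

lemma shiftRel_equiv (hn : Even n) :
    Equivalence (fun α β : PrimWord A n => ShiftRel A n α.1 β.1) := by
  constructor
  · exact fun α => ⟨0, Even.zero, (shift_zero α.1).symm⟩
  · rintro α β ⟨s, hs, hβ⟩
    rcases Nat.eq_zero_or_pos n with h0 | hpos
    · refine ⟨0, Even.zero, ?_⟩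
      rw [shift_zero]
      subst h0
      exact funext fun i => i.elim0
    · refine ⟨n - s % n, ?_, ?_⟩
      · obtain ⟨a, ha⟩ := even_mod hs hn
        obtain ⟨b, hb⟩ := hn
        exact ⟨b - a, by omega⟩
      · rw [hβ, shift_shift, shift_mod]
        have hlt : s % n < n := Nat.mod_lt _ hpos
        have hd : s = n * (s / n) + s % n := (Nat.div_add_mod s n).symm
        have : (s + (n - s % n)) % n = 0 := by
          have hmul : n * (s / n + 1) = n * (s / n) + n := by ring
          have : s + (n - s % n) = n * (s / n + 1) := by omega
          rw [this, Nat.mul_mod_right]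
        rw [this, shift_zero]
  · rintro α β γ ⟨s, hs, hβ⟩ ⟨t, ht, hγ⟩
    exact ⟨s + t, hs.add ht, by rw [hγ, hβ, shift_shift]⟩

lemma exists_shift_repr (hn : Even n) (hpos : 0 < n) (β : PrimWord A n) :
    ∃ s, Even s ∧ s < n ∧ β.1 = shift s ((Quot.mk _ β : GeodClass A n).out.1) := by
  have h2 : Quot.mk _ (Quot.mk (fun α β : PrimWord A n => ShiftRel A n α.1 β.1) β).out
      = Quot.mk _ β := Quot.out_eq _
  have hrel := ((shiftRel_equiv hn).eqvGen_iff).mp (Quot.eq.mp h2)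
  obtain ⟨s, hs, hβ⟩ := hrel
  exact ⟨s % n, even_mod hs hn, Nat.mod_lt _ hpos, by rw [hβ, ← shift_mod]⟩

lemma card_primWord_le (hn : Even n) (hpos : 0 < n) :
    Nat.card (PrimWord A n) ≤ Nat.card (GeodClass A n) * (n / 2) := by
  classical
  set r := fun α β : PrimWord A n => ShiftRel A n α.1 β.1 with hr
  have key : ∀ β : PrimWord A n, ∃ s, Even s ∧ s < n ∧
      β.1 = shift s ((Quot.mk r β : GeodClass A n).out.1) := fun β =>
    exists_shift_repr hn hpos β
  set P : PrimWord A n → ℕ → Prop := fun β s => Even s ∧ s < n ∧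
      β.1 = shift s ((Quot.mk r β : GeodClass A n).out.1) with hP
  have hmem : ∀ β, sInf {s | P β s} ∈ {s | P β s} := fun β => Nat.sInf_mem (key β)
  set F : PrimWord A n → GeodClass A n × Fin (n / 2) := fun β =>
    (Quot.mk r β, ⟨sInf {s | P β s} / 2, by
      obtain ⟨he, hlt, -⟩ := hmem β
      obtain ⟨b, hb⟩ := hn
      obtain ⟨a, ha⟩ := he
      omega⟩) with hF
  have hinj : Function.Injective F := by
    intro β γ h
    have h1 : Quot.mk r β = Quot.mk r γ := congrArg Prod.fst h
    have h2 : sInf {s | P β s} / 2 = sInf {s | P γ s} / 2 :=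
      congrArg Fin.val (congrArg Prod.snd h)
    obtain ⟨he1, -, hβ⟩ := hmem β
    obtain ⟨he2, -, hγ⟩ := hmem γ
    have hss : sInf {s | P β s} = sInf {s | P γ s} := by
      obtain ⟨a, ha⟩ := he1
      obtain ⟨b, hb⟩ := he2
      omega
    apply Subtype.ext
    rw [hβ, hγ, h1, hss]
  calc Nat.card (PrimWord A n) ≤ Nat.card (GeodClass A n × Fin (n / 2)) :=
        Nat.card_le_card_of_injective F hinj
    _ = Nat.card (GeodClass A n) * (n / 2) := by
        rw [Nat.card_prod, Nat.card_eq_fintype_card (α := Fin (n/2)), Fintype.card_fin]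

lemma hasPeriod_self (hpos : 0 < n) (α : Word A n) : HasPeriod α n :=
  ⟨hpos, dvd_rfl, fun i h => absurd h (by omega)⟩

lemma mp_hasPeriod (hpos : 0 < n) (α : Word A n) : HasPeriod α (mp α) :=
  Nat.sInf_mem (s := {d | HasPeriod α d}) ⟨n, by exact hasPeriod_self hpos α⟩

lemma period_mod {d : ℕ} {α : Word A n} (hp : HasPeriod α d) :
    ∀ i (h : i < n), α ⟨i, h⟩ = α ⟨i % d,
      Nat.lt_of_lt_of_le (Nat.mod_lt i hp.1) (Nat.le_of_dvd (by omega) hp.2.1)⟩ := by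
  intro i
  induction i using Nat.strong_induction_on with
  | _ i ih =>
    intro h
    by_cases hc : i < d
    · exact word_congr α _ _ (Nat.mod_eq_of_lt hc).symm
    · push_neg at hc
      have hd : 0 < d := hp.1
      have h1 : (i - d) + d < n := by omega
      have h2 := hp.2.2 (i - d) h1
      have e1 : α ⟨i, h⟩ = α ⟨i - d + d, h1⟩ := word_congr α h h1 (by omega)
      have e2 := ih (i - d) (by omega) (by omega)
      have e3 : (i - d) % d = i % d := by
        conv_rhs => rw [show i = (i - d) + d by omega]
        rw [Nat.add_mod_right]
      rw [e1, ← h2, e2]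
      exact word_congr α _ _ e3

lemma not_primitive_zero (α : Word A 0) : ¬ Primitive α := by
  have hset : {d | HasPeriod α d} = {d | 0 < d} := by
    ext d
    exact ⟨fun h => h.1, fun h => ⟨h, dvd_zero d, fun i hi => absurd hi (by omega)⟩⟩
  have hmp : mp α = 1 := by
    rw [mp, hset]
    refine le_antisymm (Nat.sInf_le (by norm_num)) ?_
    rcases Nat.eq_zero_or_pos (sInf {d | 0 < d}) with h | h
    · rcases Nat.sInf_eq_zero.mp h with h' | h'
      · exact absurd h' (by norm_num)
      · exfalso
        have h1 : (1 : ℕ) ∈ {d | 0 < d} := by norm_num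
        rw [h'] at h1
        exact h1
    · exact h
  rintro hP
  rcases hP with h | ⟨ho, h⟩
  · simp [hmp] at h
  · simp [Nat.odd_iff] at ho

lemma mp_le_half {α : Word A n} (hpos : 0 < n) (hα : ¬ Primitive α) :
    0 < mp α ∧ mp α ∣ n ∧ mp α ≤ n / 2 := by
  have hp := mp_hasPeriod hpos α
  have hne : mp α ≠ n := fun h => hα (Or.inl h)
  obtain ⟨c, hc⟩ := hp.2.1
  have hc2 : c ≥ 2 := by
    rcases Nat.lt_or_ge c 2 with h | h
    · interval_cases c <;> omega
    · exact h
  refine ⟨hp.1, hp.2.1, ?_⟩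
  have h2 : mp α * 2 ≤ mp α * c := Nat.mul_le_mul_left _ hc2
  omega

lemma card_nonprim_le (hpos : 0 < n) :
    Nat.card {α : Word A n // ¬ Primitive α} ≤ (n / 2) * A ^ (n / 2) := by
  classical
  set G : {α : Word A n // ¬ Primitive α} → Fin (n / 2) × (Fin (n / 2) → Fin A) :=
    fun x => (⟨mp x.1 - 1, by obtain ⟨h1, h2, h3⟩ := mp_le_half hpos x.2; omega⟩,
      fun i => x.1 ⟨i.1 % mp x.1, by
        obtain ⟨h1, h2, h3⟩ := mp_le_half hpos x.2
        have := Nat.mod_lt i.1 h1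
        omega⟩) with hG
  have hinj : Function.Injective G := by
    intro x y h
    have h1 : mp x.1 - 1 = mp y.1 - 1 := congrArg Fin.val (congrArg Prod.fst h)
    obtain ⟨hx1, hx2, hx3⟩ := mp_le_half hpos x.2
    obtain ⟨hy1, hy2, hy3⟩ := mp_le_half hpos y.2
    have hmp : mp x.1 = mp y.1 := by omega
    have h2 := congrArg Prod.snd h
    simp only [hG] at h2
    apply Subtype.ext
    funext j
    have hjd : j.1 % mp x.1 < n :=
      Nat.lt_of_lt_of_le (Nat.mod_lt _ hx1) (le_trans hx3 (Nat.div_le_self n 2))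
    have hjdn : j.1 % mp x.1 < n / 2 := by have := Nat.mod_lt j.1 hx1; omega
    have step1 : x.1 j = x.1 ⟨j.1 % mp x.1, hjd⟩ := by
      exact period_mod (mp_hasPeriod hpos x.1) j.1 j.2
    have m1 : j.1 % mp x.1 % mp x.1 = j.1 % mp x.1 := Nat.mod_mod_of_dvd _ dvd_rfl
    have m2 : j.1 % mp x.1 % mp y.1 = j.1 % mp x.1 := by rw [← hmp]; exact m1
    have h3 := congrFun h2 ⟨j.1 % mp x.1, hjdn⟩
    have e1 : x.1 ⟨j.1 % mp x.1, hjd⟩ = x.1 ⟨j.1 % mp x.1 % mp x.1, m1.symm ▸ hjd⟩ :=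
      word_congr _ hjd _ m1.symm
    have e2 : y.1 ⟨j.1 % mp x.1 % mp y.1, m2.symm ▸ hjd⟩ = y.1 ⟨j.1 % mp x.1, hjd⟩ :=
      word_congr _ _ hjd m2
    have step2 : y.1 j = y.1 ⟨j.1 % mp y.1,
        Nat.lt_of_lt_of_le (Nat.mod_lt _ hy1) (le_trans hy3 (Nat.div_le_self n 2))⟩ := by
      exact period_mod (mp_hasPeriod hpos y.1) j.1 j.2
    have e3 : y.1 ⟨j.1 % mp y.1,
        Nat.lt_of_lt_of_le (Nat.mod_lt _ hy1) (le_trans hy3 (Nat.div_le_self n 2))⟩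
        = y.1 ⟨j.1 % mp x.1, hjd⟩ := word_congr _ _ hjd (by rw [hmp])
    calc x.1 j = x.1 ⟨j.1 % mp x.1, hjd⟩ := step1
      _ = x.1 ⟨j.1 % mp x.1 % mp x.1, m1.symm ▸ hjd⟩ := e1
      _ = y.1 ⟨j.1 % mp x.1 % mp y.1, m2.symm ▸ hjd⟩ := by exact h3
      _ = y.1 ⟨j.1 % mp x.1, hjd⟩ := e2
      _ = y.1 j := (step2.trans e3).symm
  calc Nat.card {α : Word A n // ¬ Primitive α}
      ≤ Nat.card (Fin (n / 2) × (Fin (n / 2) → Fin A)) := Nat.card_le_card_of_injective G hinj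
    _ = (n / 2) * A ^ (n / 2) := by
        rw [Nat.card_prod, Nat.card_fun]
        simp

end Aux

section Moments

variable {A : ℕ}

/-- centered letter value -/
noncomputable def fc (A : ℕ) (v : Fin A) : ℝ := 2 * (v : ℝ) + 1 - A

/-- centered sum of letters -/
noncomputable def Tc {A n : ℕ} (α : Word A n) : ℝ := ∑ i, fc A (α i)

lemma fc_rev (v : Fin A) : fc A v.rev = - fc A v := by
  have hv : (v : ℕ) < A := v.2
  simp only [fc, Fin.val_rev]
  have h : ((A - (v + 1) : ℕ) : ℝ) = (A : ℝ) - (v : ℝ) - 1 := by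
    push_cast [Nat.cast_sub (by omega : (v : ℕ) + 1 ≤ A)]
    ring
  rw [h]; ring

lemma sum_fc_odd {p : ℕ} (hp : Odd p) : ∑ v : Fin A, fc A v ^ p = 0 := by
  have h1 : ∑ v : Fin A, fc A (Fin.revPerm v) ^ p = ∑ v : Fin A, fc A v ^ p :=
    Equiv.sum_comp Fin.revPerm (fun v => fc A v ^ p)
  have h2 : ∀ v : Fin A, fc A (Fin.revPerm v) ^ p = - (fc A v ^ p) := by
    intro v
    rw [show Fin.revPerm v = v.rev from rfl, fc_rev, hp.neg_pow]
  rw [Finset.sum_congr rfl (fun v _ => h2 v), Finset.sum_neg_distrib] at h1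
  linarith [h1]

lemma abs_fc_le (hA : 1 < A) (v : Fin A) : |fc A v| ≤ (A : ℝ) := by
  have hv : (v : ℕ) < A := v.2
  have h1 : ((v : ℕ) : ℝ) ≤ (A : ℝ) - 1 := by
    have : ((v : ℕ) : ℝ) + 1 ≤ (A : ℝ) := by exact_mod_cast hv
    linarith
  have h0 : (0 : ℝ) ≤ ((v : ℕ) : ℝ) := Nat.cast_nonneg _
  have hA1 : (1 : ℝ) ≤ (A : ℝ) := by exact_mod_cast hA.le
  rw [abs_le, fc]
  constructor <;> linarith

lemma fc_pow_le (hA : 1 < A) (v : Fin A) (p : ℕ) : fc A v ^ (2 * p) ≤ (A : ℝ) ^ (2 * p) := by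
  have h : |fc A v| ^ (2 * p) ≤ (A : ℝ) ^ (2 * p) :=
    pow_le_pow_left₀ (abs_nonneg _) (abs_fc_le hA v) _
  rwa [pow_mul, sq_abs, ← pow_mul] at h

lemma sum_fc_sq_le (hA : 1 < A) : ∑ v : Fin A, fc A v ^ 2 ≤ (A : ℝ) ^ 3 := by
  calc ∑ v : Fin A, fc A v ^ 2 ≤ ∑ _v : Fin A, (A : ℝ) ^ 2 :=
        Finset.sum_le_sum (fun v _ => by simpa using fc_pow_le hA v 1)
    _ = (A : ℝ) ^ 3 := by
        rw [Finset.sum_const, Finset.card_univ, Fintype.card_fin, nsmul_eq_mul]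
        ring

lemma sum_fc_four_le (hA : 1 < A) : ∑ v : Fin A, fc A v ^ 4 ≤ (A : ℝ) ^ 5 := by
  calc ∑ v : Fin A, fc A v ^ 4 ≤ ∑ _v : Fin A, (A : ℝ) ^ 4 :=
        Finset.sum_le_sum (fun v _ => by simpa using fc_pow_le hA v 2)
    _ = (A : ℝ) ^ 5 := by
        rw [Finset.sum_const, Finset.card_univ, Fintype.card_fin, nsmul_eq_mul]
        ring

lemma Tc_cons {n : ℕ} (x : Fin A) (β : Word A n) :
    Tc (Fin.cons x β : Word A (n+1)) = fc A x + Tc β := by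
  unfold Tc
  rw [Fin.sum_univ_succ]
  simp

lemma sum_word_succ {n : ℕ} (g : ℝ → ℝ) :
    ∑ α : Word A (n+1), g (Tc α) = ∑ β : Word A n, ∑ x : Fin A, g (fc A x + Tc β) := by
  have h := Equiv.sum_comp (Fin.consEquiv (fun _ : Fin (n+1) => Fin A))
    (fun α : Word A (n+1) => g (Tc α))
  rw [← h, Fintype.sum_prod_type]
  rw [Finset.sum_comm]
  refine Finset.sum_congr rfl fun β _ => Finset.sum_congr rfl fun x _ => ?_
  have h2 : (Fin.consEquiv (fun _ : Fin (n+1) => Fin A)) (x, β) = Fin.cons x β := rfl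
  rw [h2, Tc_cons]

lemma card_word (n : ℕ) : (Fintype.card (Word A n)) = A ^ n := by
  rw [Fintype.card_fun]
  simp

lemma sum_sq_nonneg {n : ℕ} : (0:ℝ) ≤ ∑ β : Word A n, Tc β ^ 2 :=
  Finset.sum_nonneg fun β _ => sq_nonneg _

lemma M2_le (hA : 1 < A) : ∀ n : ℕ, ∑ α : Word A n, Tc α ^ 2 ≤ (n : ℝ) * A ^ 2 * A ^ n := by
  intro n
  induction n with
  | zero =>
    have h : ∀ α : Word A 0, Tc α ^ 2 = 0 := by
      intro α; simp [Tc]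
    rw [Finset.sum_congr rfl (fun α _ => h α)]
    simp
  | succ n ih =>
    have h0 : ∑ x : Fin A, fc A x = 0 := by
      simpa using sum_fc_odd (A := A) odd_one
    have hinner : ∀ t : ℝ, ∑ x : Fin A, (fc A x + t) ^ 2
        = (∑ x : Fin A, fc A x ^ 2) + (A : ℝ) * t ^ 2 := by
      intro t
      calc ∑ x : Fin A, (fc A x + t) ^ 2
          = ∑ x : Fin A, (fc A x ^ 2 + (2 * t) * fc A x + t ^ 2) :=
            Finset.sum_congr rfl (by intros; ring)
        _ = (∑ x : Fin A, fc A x ^ 2) + (2 * t) * (∑ x : Fin A, fc A x)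
            + (Fintype.card (Fin A) : ℝ) * t ^ 2 := by
            rw [Finset.sum_add_distrib, Finset.sum_add_distrib, ← Finset.mul_sum,
              Finset.sum_const, Finset.card_univ, nsmul_eq_mul]
        _ = (∑ x : Fin A, fc A x ^ 2) + (A : ℝ) * t ^ 2 := by
            rw [h0, Fintype.card_fin]; ring
    have hA0 : (0:ℝ) ≤ (A:ℝ) := Nat.cast_nonneg _
    have hAn : (0:ℝ) ≤ (A:ℝ) ^ n := by positivity
    calc ∑ α : Word A (n+1), Tc α ^ 2
        = ∑ β : Word A n, ∑ x : Fin A, (fc A x + Tc β) ^ 2 :=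
          sum_word_succ (fun t => t ^ 2)
      _ = ∑ β : Word A n, ((∑ x : Fin A, fc A x ^ 2) + (A : ℝ) * Tc β ^ 2) :=
          Finset.sum_congr rfl (fun β _ => hinner _)
      _ = ((A:ℝ) ^ n) * (∑ x : Fin A, fc A x ^ 2) + (A:ℝ) * ∑ β : Word A n, Tc β ^ 2 := by
          rw [Finset.sum_add_distrib, Finset.sum_const, Finset.card_univ, card_word,
            nsmul_eq_mul, ← Finset.mul_sum]
          push_cast
          ring
      _ ≤ ((A:ℝ) ^ n) * (A:ℝ) ^ 3 + (A:ℝ) * ((n : ℝ) * A ^ 2 * A ^ n) := by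
          have h1 := sum_fc_sq_le hA
          have h2 := mul_le_mul_of_nonneg_left ih hA0
          nlinarith [mul_le_mul_of_nonneg_left h1 hAn]
      _ = ((n+1 : ℕ) : ℝ) * A ^ 2 * A ^ (n+1) := by push_cast; ring

lemma M4_le (hA : 1 < A) : ∀ n : ℕ, ∑ α : Word A n, Tc α ^ 4
    ≤ 3 * (n : ℝ) ^ 2 * A ^ 4 * A ^ n := by
  intro n
  induction n with
  | zero =>
    have h : ∀ α : Word A 0, Tc α ^ 4 = 0 := by intro α; simp [Tc]
    rw [Finset.sum_congr rfl (fun α _ => h α)]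
    simp
  | succ n ih =>
    have h1 : ∑ x : Fin A, fc A x = 0 := by simpa using sum_fc_odd (A := A) odd_one
    have h3 : ∑ x : Fin A, fc A x ^ 3 = 0 := sum_fc_odd (A := A) ⟨1, by norm_num⟩
    have hinner : ∀ t : ℝ, ∑ x : Fin A, (fc A x + t) ^ 4
        = (∑ x : Fin A, fc A x ^ 4) + (6 * (∑ x : Fin A, fc A x ^ 2)) * t ^ 2
          + (A : ℝ) * t ^ 4 := by
      intro t
      calc ∑ x : Fin A, (fc A x + t) ^ 4
          = ∑ x : Fin A, (fc A x ^ 4 + (4 * t) * fc A x ^ 3 + (6 * t ^ 2) * fc A x ^ 2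
            + (4 * t ^ 3) * fc A x + t ^ 4) := Finset.sum_congr rfl (by intros; ring)
        _ = (∑ x : Fin A, fc A x ^ 4) + (4 * t) * (∑ x : Fin A, fc A x ^ 3)
            + (6 * t ^ 2) * (∑ x : Fin A, fc A x ^ 2)
            + (4 * t ^ 3) * (∑ x : Fin A, fc A x)
            + (Fintype.card (Fin A) : ℝ) * t ^ 4 := by
            rw [Finset.sum_add_distrib, Finset.sum_add_distrib, Finset.sum_add_distrib,
              Finset.sum_add_distrib, ← Finset.mul_sum, ← Finset.mul_sum, ← Finset.mul_sum,
              Finset.sum_const, Finset.card_univ, nsmul_eq_mul]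
        _ = _ := by rw [h1, h3, Fintype.card_fin]; ring
    have hA0 : (0:ℝ) ≤ (A:ℝ) := Nat.cast_nonneg _
    have hA2 : (2:ℝ) ≤ (A:ℝ) := by exact_mod_cast hA
    have hAn : (0:ℝ) ≤ (A:ℝ) ^ n := by positivity
    have hfc2 : (0:ℝ) ≤ ∑ x : Fin A, fc A x ^ 2 :=
      Finset.sum_nonneg fun x _ => sq_nonneg _
    calc ∑ α : Word A (n+1), Tc α ^ 4
        = ∑ β : Word A n, ∑ x : Fin A, (fc A x + Tc β) ^ 4 :=
          sum_word_succ (fun t => t ^ 4)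
      _ = ((A:ℝ) ^ n) * (∑ x : Fin A, fc A x ^ 4)
          + (6 * (∑ x : Fin A, fc A x ^ 2)) * (∑ β : Word A n, Tc β ^ 2)
          + (A:ℝ) * ∑ β : Word A n, Tc β ^ 4 := by
          rw [Finset.sum_congr rfl (fun β (_ : β ∈ Finset.univ) => hinner (Tc β)),
            Finset.sum_add_distrib, Finset.sum_add_distrib, Finset.sum_const,
            Finset.card_univ, card_word, nsmul_eq_mul, ← Finset.mul_sum, ← Finset.mul_sum]
          push_cast
          ring
      _ ≤ ((A:ℝ) ^ n) * (A:ℝ) ^ 5 + 6 * (A:ℝ) ^ 3 * ((n : ℝ) * A ^ 2 * A ^ n)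
          + (A:ℝ) * (3 * (n:ℝ) ^ 2 * A ^ 4 * A ^ n) := by
          have hb1 := sum_fc_four_le hA
          have hb2 := sum_fc_sq_le hA
          have hb3 := M2_le hA n
          have hb4 := ih
          have e1 : ((A:ℝ)^n) * (∑ x : Fin A, fc A x ^ 4) ≤ ((A:ℝ)^n) * (A:ℝ)^5 :=
            mul_le_mul_of_nonneg_left hb1 hAn
          have e3 : (A:ℝ) * (∑ β : Word A n, Tc β ^ 4) ≤ (A:ℝ) * (3 * (n:ℝ)^2 * A^4 * A^n) :=
            mul_le_mul_of_nonneg_left hb4 hA0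
          have e2 : (6 * (∑ x : Fin A, fc A x ^ 2)) * (∑ β : Word A n, Tc β ^ 2)
              ≤ 6 * (A:ℝ)^3 * ((n : ℝ) * A ^ 2 * A ^ n) := by
            have hM2 : (0:ℝ) ≤ ∑ β : Word A n, Tc β ^ 2 := sum_sq_nonneg
            nlinarith [mul_le_mul hb2 hb3 hM2 (by positivity : (0:ℝ) ≤ (A:ℝ)^3)]
          linarith
      _ ≤ 3 * ((n+1 : ℕ) : ℝ) ^ 2 * A ^ 4 * A ^ (n+1) := by
          have key : 3 * ((n:ℝ) + 1) ^ 2 * (A:ℝ) ^ 4 * (A:ℝ) ^ (n+1)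
              - (((A:ℝ) ^ n) * (A:ℝ) ^ 5 + 6 * (A:ℝ) ^ 3 * ((n : ℝ) * (A:ℝ) ^ 2 * (A:ℝ) ^ n)
                + (A:ℝ) * (3 * (n:ℝ) ^ 2 * (A:ℝ) ^ 4 * (A:ℝ) ^ n)) = 2 * (A:ℝ)^5 * (A:ℝ)^n := by
            rw [pow_succ]; ring
          push_cast
          linarith [key, mul_nonneg (mul_nonneg (by norm_num : (0:ℝ) ≤ 2)
            (pow_nonneg hA0 5)) hAn]

lemma Tc_eq {n : ℕ} (α : Word A n) :
    Tc α = (wlen α : ℝ) - n * ((A : ℝ) + 1) := by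
  have h : ∀ i : Fin n, fc A (α i) = 2 * ((letter α i : ℕ) : ℝ) - ((A : ℝ) + 1) := by
    intro i
    unfold fc letter
    push_cast
    ring
  have hw : (wlen α : ℝ) = 2 * ∑ i : Fin n, ((letter α i : ℕ) : ℝ) := by
    unfold wlen
    push_cast
    rw [Finset.mul_sum]
  rw [hw]
  calc Tc α = ∑ i : Fin n, (2 * ((letter α i : ℕ) : ℝ) - ((A : ℝ) + 1)) :=
        Finset.sum_congr rfl (fun i _ => h i)
    _ = (∑ i : Fin n, 2 * ((letter α i : ℕ) : ℝ)) - (n : ℝ) * ((A : ℝ) + 1) := by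
        rw [Finset.sum_sub_distrib, Finset.sum_const, Finset.card_univ, Fintype.card_fin,
          nsmul_eq_mul]
    _ = _ := by rw [Finset.mul_sum]

lemma card_bad_le (hA : 1 < A) {ε : ℝ} (hε : 0 < ε) {n : ℕ} (hn : 0 < n) :
    (Nat.card {α : Word A n // ε < |(wlen α : ℝ) / n - ((A : ℝ) + 1)|} : ℝ) ≤
      3 * (A:ℝ) ^ 4 * (A:ℝ) ^ n / ((n : ℝ) ^ 2 * ε ^ 4) := by
  classical
  have hnR : (0:ℝ) < (n : ℝ) := by exact_mod_cast hn
  set p : Word A n → Prop := fun α => ε < |(wlen α : ℝ) / n - ((A : ℝ) + 1)| with hp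
  have key : ∀ α : Word A n, p α → ((n : ℝ) * ε) ^ 4 ≤ Tc α ^ 4 := by
    intro α hα
    have h1 : |Tc α| = (n : ℝ) * |(wlen α : ℝ) / n - ((A : ℝ) + 1)| := by
      rw [Tc_eq, ← abs_of_pos hnR, ← abs_mul]
      congr 1
      field_simp
      rw [abs_of_pos hnR]
      ring
    have h2 : (n : ℝ) * ε ≤ |Tc α| := by
      rw [h1]
      have := mul_le_mul_of_nonneg_left hα.le hnR.le
      linarith
    have h3 : ((n : ℝ) * ε) ^ 4 ≤ |Tc α| ^ 4 :=
      pow_le_pow_left₀ (by positivity) h2 4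
    have h4 : |Tc α| ^ 4 = Tc α ^ 4 := by
      rw [show (4 : ℕ) = 2 * 2 from rfl, pow_mul, pow_mul, sq_abs]
    linarith
  set S : Finset (Word A n) := Finset.univ.filter p with hS
  have hcard : (Nat.card {α : Word A n // p α}) = S.card := by
    rw [Nat.card_eq_fintype_card, Fintype.card_subtype]
  have hb1 : (S.card : ℝ) * ((n : ℝ) * ε) ^ 4 ≤ ∑ α ∈ S, Tc α ^ 4 := by
    have := Finset.card_nsmul_le_sum S (fun α => Tc α ^ 4) (((n : ℝ) * ε) ^ 4)
      (fun α hα => key α (Finset.mem_filter.mp hα).2)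
    rwa [nsmul_eq_mul] at this
  have hb2 : ∑ α ∈ S, Tc α ^ 4 ≤ ∑ α : Word A n, Tc α ^ 4 :=
    Finset.sum_le_sum_of_subset_of_nonneg (Finset.filter_subset _ _)
      (fun α _ _ => by positivity)
  have hb3 := M4_le hA n
  have main : (S.card : ℝ) * ((n : ℝ) * ε) ^ 4 ≤ 3 * (n : ℝ) ^ 2 * A ^ 4 * A ^ n := by
    linarith
  rw [hcard, le_div_iff₀ (by positivity)]
  have hfac : (0:ℝ) < (n:ℝ) ^ 2 := by positivity
  rw [← mul_le_mul_iff_of_pos_left hfac]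
  calc (n:ℝ)^2 * ((S.card : ℝ) * ((n:ℝ)^2 * ε^4)) = (S.card : ℝ) * ((n : ℝ) * ε) ^ 4 := by ring
    _ ≤ 3 * (n : ℝ) ^ 2 * A ^ 4 * A ^ n := main
    _ = (n:ℝ)^2 * (3 * (A:ℝ)^4 * (A:ℝ)^n) := by ring

end Moments

section Assembly

variable {A : ℕ}

lemma sum_geom_le {B : ℝ} (hB : 4 ≤ B) :
    ∀ k : ℕ, 2 ≤ k → ∑ j ∈ Finset.Icc 1 k, B ^ j / (j : ℝ) ^ 2 ≤ 4 * B ^ k / (k : ℝ) ^ 2 := by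
  intro k hk
  induction k, hk using Nat.le_induction with
  | base =>
    have h : Finset.Icc 1 2 = ({1, 2} : Finset ℕ) := rfl
    rw [h]
    rw [Finset.sum_insert (by norm_num), Finset.sum_singleton]
    push_cast
    nlinarith [hB]
  | succ k hk ih =>
    rw [Finset.sum_Icc_succ_top (by omega : 1 ≤ k + 1)]
    have hB0 : (0:ℝ) < B := by linarith
    have hBk : (0:ℝ) < B ^ k := pow_pos hB0 k
    have hkR : (2:ℝ) ≤ (k:ℝ) := by exact_mod_cast hk
    have h1 : 4 * B ^ k / (k:ℝ) ^ 2 ≤ 3 * B ^ (k+1) / ((k:ℝ) + 1) ^ 2 := by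
      rw [div_le_div_iff₀ (by positivity) (by positivity)]
      have hpow : B ^ (k+1) = B ^ k * B := pow_succ B k
      rw [hpow]
      have inner : 4 * ((k:ℝ) + 1) ^ 2 ≤ 3 * B * (k:ℝ) ^ 2 := by
        nlinarith [sq_nonneg ((k:ℝ) - 2), hkR, hB]
      nlinarith [mul_le_mul_of_nonneg_left inner hBk.le]
    have h2 : 3 * B ^ (k+1) / ((k:ℝ) + 1) ^ 2 + B ^ (k+1) / ((k:ℝ) + 1) ^ 2
        = 4 * B ^ (k+1) / ((k:ℝ) + 1) ^ 2 := by ring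
    have hcast : ((k + 1 : ℕ) : ℝ) = (k:ℝ) + 1 := by push_cast; ring
    rw [hcast]
    linarith [ih]

lemma two_mul_le_pow (hA : 1 < A) : ∀ k : ℕ, 1 ≤ k → 2 * k ≤ A ^ k := by
  intro k hk
  have h2 : 2 * k ≤ 2 ^ k := by
    clear hA
    induction k, hk using Nat.le_induction with
    | base => norm_num
    | succ k hk ih =>
      have : 2 ≤ 2 ^ k := by
        calc 2 = 2 ^ 1 := rfl
        _ ≤ 2 ^ k := Nat.pow_le_pow_right (by norm_num) hk
      rw [pow_succ]
      omega
  calc 2 * k ≤ 2 ^ k := h2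
    _ ≤ A ^ k := Nat.pow_le_pow_left hA k

/-- The index equivalence. -/
def idxEquiv (k : ℕ) : {n : ℕ // n ≤ 2 * k ∧ Even n} ≃ Fin (k + 1) where
  toFun x := ⟨x.1 / 2, by obtain ⟨a, ha⟩ := x.2.2; have := x.2.1; omega⟩
  invFun j := ⟨2 * j.1, by have := j.2; omega, ⟨j.1, two_mul j.1⟩⟩
  left_inv x := Subtype.ext (by
    obtain ⟨a, ha⟩ := x.2.2
    show 2 * (x.1 / 2) = x.1
    omega)
  right_inv j := Fin.ext (by show 2 * j.1 / 2 = j.1; omega)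

lemma card_sigma_fin {m : ℕ} (γ : Fin m → Type) [∀ j, Finite (γ j)] :
    Nat.card (Σ j, γ j) = ∑ j, Nat.card (γ j) := by
  letI : ∀ j, Fintype (γ j) := fun j => Fintype.ofFinite _
  rw [Nat.card_eq_fintype_card, Fintype.card_sigma]
  exact Finset.sum_congr rfl fun j _ => (Nat.card_eq_fintype_card).symm

/-- the "bad word" predicate -/
def BadW (A : ℕ) (ε : ℝ) (n : ℕ) (α : Word A n) : Prop :=
  Primitive α ∧ ε < |(wlen α : ℝ) / (n : ℝ) - ((A : ℝ) + 1)|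

lemma numer_le (hA : 1 < A) {ε : ℝ} (hε : 0 < ε) {k : ℕ} (hk : 2 ≤ k) :
    (Nat.card {C : Geod A (2 * k) //
        ε < |(wlenG C : ℝ) / (plenG C : ℝ) - ((A : ℝ) + 1)|} : ℝ)
      ≤ 3 * (A:ℝ) ^ 4 * (A:ℝ) ^ (2 * k) / (ε ^ 4 * (k:ℝ) ^ 2) := by
  classical
  -- step 1 : inject into a sigma type of bad primitive words
  have step1 : Nat.card {C : Geod A (2 * k) //
        ε < |(wlenG C : ℝ) / (plenG C : ℝ) - ((A : ℝ) + 1)|}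
      ≤ Nat.card (Σ n : {n : ℕ // n ≤ 2 * k ∧ Even n},
          {α : Word A n.1 // BadW A ε n.1 α}) := by
    apply Nat.card_le_card_of_injective
      (f := fun x => ⟨x.1.1, ⟨x.1.2.out.1, x.1.2.out.2, x.2⟩⟩)
    rintro ⟨⟨n₁, q₁⟩, hx⟩ ⟨⟨n₂, q₂⟩, hy⟩ h
    have h1 : n₁ = n₂ := congrArg Sigma.fst h
    subst h1
    have hh := eq_of_heq (Sigma.mk.inj_iff.mp h).2
    have h2 := Subtype.ext_iff.mp hh
    have h3 : q₁.out = q₂.out := by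
      apply Subtype.ext
      exact h2
    have h4 : q₁ = q₂ := by rw [← Quot.out_eq q₁, ← Quot.out_eq q₂, h3]
    exact Subtype.ext (congrArg (Sigma.mk n₁) h4)
  -- step 2 : re-index the sigma type by Fin (k+1)
  have step2 : Nat.card (Σ n : {n : ℕ // n ≤ 2 * k ∧ Even n},
        {α : Word A n.1 // BadW A ε n.1 α})
      = Nat.card (Σ j : Fin (k + 1), {α : Word A (2 * j.1) // BadW A ε (2 * j.1) α}) := by
    refine Nat.card_congr ?_
    exact (Equiv.sigmaCongrLeft (β := fun n : {n : ℕ // n ≤ 2 * k ∧ Even n} =>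
      {α : Word A n.1 // BadW A ε n.1 α}) (idxEquiv k).symm).symm
  -- step 3 : compute the cardinality of the sigma type
  have step3 : (Nat.card (Σ j : Fin (k + 1), {α : Word A (2 * j.1) // BadW A ε (2 * j.1) α}))
      = ∑ j : Fin (k + 1), Nat.card {α : Word A (2 * j.1) // BadW A ε (2 * j.1) α} :=
    card_sigma_fin _
  -- the counting function
  set c : ℕ → ℝ := fun m => (Nat.card {α : Word A (2 * m) // BadW A ε (2 * m) α} : ℝ) with hc
  have step4 : Nat.card {C : Geod A (2 * k) //
        ε < |(wlenG C : ℝ) / (plenG C : ℝ) - ((A : ℝ) + 1)|} ≤ ∑ j : Fin (k + 1),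
      Nat.card {α : Word A (2 * j.1) // BadW A ε (2 * j.1) α} := by
    rw [← step3, ← step2]
    exact step1
  have hmain : (Nat.card {C : Geod A (2 * k) //
        ε < |(wlenG C : ℝ) / (plenG C : ℝ) - ((A : ℝ) + 1)|} : ℝ)
      ≤ ∑ j ∈ Finset.range (k + 1), c j := by
    calc (Nat.card {C : Geod A (2 * k) //
        ε < |(wlenG C : ℝ) / (plenG C : ℝ) - ((A : ℝ) + 1)|} : ℝ)
        ≤ ((∑ j : Fin (k + 1),
            Nat.card {α : Word A (2 * j.1) // BadW A ε (2 * j.1) α} : ℕ) : ℝ) :=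
          Nat.cast_le.mpr step4
      _ = ∑ j : Fin (k + 1), c j.1 := by rw [Nat.cast_sum]
      _ = ∑ j ∈ Finset.range (k + 1), c j := Fin.sum_univ_eq_sum_range c (k + 1)
  -- j = 0 contributes nothing
  have hzero : c 0 = 0 := by
    have : IsEmpty {α : Word A (2 * 0) // BadW A ε (2 * 0) α} := by
      refine ⟨fun x => ?_⟩
      exact not_primitive_zero x.1 x.2.1
    simp [hc, Nat.card_of_isEmpty]
  -- per-term bound for j ≥ 1
  have hterm : ∀ j : ℕ, 1 ≤ j → c j ≤ (3 * (A:ℝ)^4 / (4 * ε^4)) * (((A:ℝ)^2) ^ j / (j:ℝ)^2) := by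
    intro j hj
    have hn : 0 < 2 * j := by omega
    have hmono : (Nat.card {α : Word A (2 * j) // BadW A ε (2 * j) α} : ℝ)
        ≤ (Nat.card {α : Word A (2 * j) // ε < |(wlen α : ℝ) / ((2*j : ℕ) : ℝ) - ((A : ℝ) + 1)|} : ℝ) := by
      have := Nat.card_le_card_of_injective
        (f := fun a : {α : Word A (2 * j) // BadW A ε (2 * j) α} =>
          (⟨a.1, a.2.2⟩ : {α : Word A (2 * j) // ε < |(wlen α : ℝ) / ((2*j : ℕ) : ℝ) - ((A : ℝ) + 1)|}))
        (by intro a b h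
            apply Subtype.ext
            have h2 := Subtype.ext_iff.mp h
            exact h2)
      exact_mod_cast this
    have hbound := card_bad_le hA hε hn
    have heq : 3 * (A:ℝ) ^ 4 * (A:ℝ) ^ (2*j) / (((2*j : ℕ) : ℝ) ^ 2 * ε ^ 4)
        = (3 * (A:ℝ)^4 / (4 * ε^4)) * (((A:ℝ)^2) ^ j / (j:ℝ)^2) := by
      have hj0 : ((j:ℕ) : ℝ) ≠ 0 := by
        have : (0:ℝ) < ((j:ℕ) : ℝ) := by exact_mod_cast (by omega : 0 < j)
        exact ne_of_gt this
      have hε0 : ε ≠ 0 := ne_of_gt hε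
      rw [← pow_mul]
      push_cast
      field_simp
      ring
    calc c j ≤ _ := hmono
      _ ≤ _ := hbound
      _ = _ := heq
  -- sum manipulation
  have hsplit : Finset.range (k+1) = insert 0 (Finset.Icc 1 k) := by
    ext x
    simp only [Finset.mem_range, Finset.mem_insert, Finset.mem_Icc]
    omega
  have h0notin : (0:ℕ) ∉ Finset.Icc 1 k := by simp
  have hsum : ∑ j ∈ Finset.range (k+1), c j = ∑ j ∈ Finset.Icc 1 k, c j := by
    rw [hsplit, Finset.sum_insert h0notin, hzero, zero_add]
  have hB4 : (4:ℝ) ≤ (A:ℝ)^2 := by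
    have : (2:ℝ) ≤ (A:ℝ) := by exact_mod_cast hA
    nlinarith
  have hD0 : (0:ℝ) ≤ 3 * (A:ℝ)^4 / (4*ε^4) := by positivity
  have hk0 : ((k:ℕ) : ℝ) ≠ 0 := by
    have : (0:ℝ) < ((k:ℕ) : ℝ) := by exact_mod_cast (by omega : 0 < k)
    exact ne_of_gt this
  have hε0 : ε ≠ 0 := ne_of_gt hε
  calc (Nat.card {C : Geod A (2 * k) //
        ε < |(wlenG C : ℝ) / (plenG C : ℝ) - ((A : ℝ) + 1)|} : ℝ)
      ≤ ∑ j ∈ Finset.range (k+1), c j := hmain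
    _ = ∑ j ∈ Finset.Icc 1 k, c j := hsum
    _ ≤ ∑ j ∈ Finset.Icc 1 k, (3 * (A:ℝ)^4/(4*ε^4)) * (((A:ℝ)^2)^j/(j:ℝ)^2) :=
        Finset.sum_le_sum (fun j hj => hterm j (Finset.mem_Icc.mp hj).1)
    _ = (3 * (A:ℝ)^4/(4*ε^4)) * ∑ j ∈ Finset.Icc 1 k, ((A:ℝ)^2)^j/(j:ℝ)^2 := by
        rw [Finset.mul_sum]
    _ ≤ (3 * (A:ℝ)^4/(4*ε^4)) * (4 * ((A:ℝ)^2)^k / (k:ℝ)^2) :=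
        mul_le_mul_of_nonneg_left (sum_geom_le hB4 k hk) hD0
    _ = 3 * (A:ℝ)^4 * (A:ℝ)^(2*k) / (ε^4 * (k:ℝ)^2) := by
        rw [← pow_mul]
        field_simp

lemma denom_ge (hA : 1 < A) {k : ℕ} (hk : 1 ≤ k) :
    (A:ℝ) ^ (2 * k) / (2 * (k:ℝ)) ≤ (piA A (2 * k) : ℝ) := by
  classical
  have hEv : Even (2 * k) := ⟨k, two_mul k⟩
  have hpos : 0 < 2 * k := by omega
  have h1 : Nat.card (GeodClass A (2 * k)) ≤ piA A (2 * k) := by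
    rw [piA]
    refine Nat.card_le_card_of_injective
      (fun q => (⟨⟨2 * k, le_refl _, hEv⟩, q⟩ : Geod A (2 * k))) ?_
    intro q₁ q₂ h
    exact eq_of_heq (Sigma.mk.inj_iff.mp h).2
  have h2 : Nat.card (PrimWord A (2 * k)) ≤ Nat.card (GeodClass A (2 * k)) * k := by
    have h := card_primWord_le (A := A) hEv hpos
    have hhalf : 2 * k / 2 = k := by omega
    rwa [hhalf] at h
  have h3 : A ^ (2 * k) ≤ Nat.card (PrimWord A (2 * k)) + k * A ^ k := by
    have hsub := card_nonprim_le (A := A) hpos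
    have hhalf : 2 * k / 2 = k := by omega
    rw [hhalf] at hsub
    have e0 : Nat.card (PrimWord A (2*k)) = Nat.card {α : Word A (2*k) // Primitive α} := rfl
    have hcompl : Fintype.card {α : Word A (2*k) // ¬ Primitive α}
        = Fintype.card (Word A (2*k)) - Fintype.card {α : Word A (2*k) // Primitive α} :=
      Fintype.card_subtype_compl _
    have hle : Fintype.card {α : Word A (2*k) // Primitive α} ≤ Fintype.card (Word A (2*k)) :=
      Fintype.card_subtype_le _
    have htot : Fintype.card (Word A (2*k)) = A ^ (2*k) := card_word _
    have e1 : Nat.card {α : Word A (2*k) // Primitive α}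
        = Fintype.card {α : Word A (2*k) // Primitive α} := Nat.card_eq_fintype_card
    have e2 : Nat.card {α : Word A (2*k) // ¬ Primitive α}
        = Fintype.card {α : Word A (2*k) // ¬ Primitive α} := Nat.card_eq_fintype_card
    omega
  have h4 : A ^ (2*k) ≤ Nat.card (GeodClass A (2*k)) * k + k * A ^ k :=
    le_trans h3 (Nat.add_le_add_right h2 _)
  have h5 : ((A:ℝ)) ^ (2*k) ≤ (Nat.card (GeodClass A (2*k)) : ℝ) * k + k * (A:ℝ)^k := by
    exact_mod_cast h4
  have h6 : 2 * (k:ℝ) ≤ (A:ℝ)^k := by exact_mod_cast two_mul_le_pow hA k hk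
  have hAk : (0:ℝ) ≤ (A:ℝ)^k := by positivity
  have h7 : (A:ℝ)^(2*k) = (A:ℝ)^k * (A:ℝ)^k := by rw [two_mul, pow_add]
  have h8 : (k:ℝ) * (A:ℝ)^k ≤ (A:ℝ)^(2*k) / 2 := by
    nlinarith [mul_le_mul_of_nonneg_right h6 hAk]
  have hkR : (0:ℝ) < (k:ℝ) := by exact_mod_cast (by omega : 0 < k)
  have h9 : (A:ℝ)^(2*k) / (2*(k:ℝ)) ≤ (Nat.card (GeodClass A (2*k)) : ℝ) := by
    rw [div_le_iff₀ (by positivity)]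
    nlinarith [h5, h8]
  exact h9.trans (by exact_mod_cast h1)

end Assembly



-- STATEMENT 4
theorem stmt4 (A : ℕ) (hA : 1 < A) :
    ∀ ε : ℝ, 0 < ε →
      Tendsto
        (fun k : ℕ =>
          (Nat.card {C : Geod A (2 * k) //
              ε < |(wlenG C : ℝ) / (plenG C : ℝ) - ((A : ℝ) + 1)|} : ℝ) /
            (piA A (2 * k) : ℝ))
        atTop (nhds 0) := by
  intro ε hε
  apply squeeze_zero' (g := fun k : ℕ => (6 * (A:ℝ)^4 / ε^4) / (k:ℝ))
  · exact Eventually.of_forall fun k => by positivity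
  · filter_upwards [eventually_ge_atTop 2] with k hk
    have hk1 : 1 ≤ k := by omega
    have hnum := numer_le hA hε hk
    have hden := denom_ge hA (k := k) hk1
    have hkR : (0:ℝ) < (k:ℝ) := by exact_mod_cast (by omega : 0 < k)
    have hDb : (0:ℝ) < (A:ℝ)^(2*k)/(2*(k:ℝ)) := by
      have hA0 : (0:ℝ) < (A:ℝ) := by exact_mod_cast (by omega : 0 < A)
      positivity
    calc (Nat.card {C : Geod A (2 * k) //
            ε < |(wlenG C : ℝ) / (plenG C : ℝ) - ((A : ℝ) + 1)|} : ℝ) / (piA A (2*k) : ℝ)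
        ≤ (3 * (A:ℝ)^4 * (A:ℝ)^(2*k)/(ε^4*(k:ℝ)^2)) / ((A:ℝ)^(2*k)/(2*(k:ℝ))) := by
          apply div_le_div₀ (by positivity) hnum hDb hden
      _ = (6 * (A:ℝ)^4 / ε^4) / (k:ℝ) := by
          have hA0 : (0:ℝ) < (A:ℝ) := by exact_mod_cast (by omega : 0 < A)
          have hAne : (A:ℝ)^(2*k) ≠ 0 := by positivity
          have hε0 : ε ≠ 0 := ne_of_gt hε
          field_simp
          ring
  · exact tendsto_const_div_atTop_nhds_zero_nat _


end Winding
end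

section
/- Let A > 1 be an integer. There exists a real constant ĉ such that the uniform random variable C_N on [A]^N defined by C_N(α) = (2/N) ∑_{j=1}^N log(T^j ᾱ) converges in probability to ĉ: for every ε > 0, (1/A^N)·#{α ∈ [A]^N : |C_N(α) − ĉ| > ε} → 0 as N → ∞. Moreover ĉ = lim_{k→∞} (2/A^k) ∑_{w ∈ [A]^k} log(val(w)). -/
open Filter

namespace Winding

noncomputable def valExt : List ℕ → ℝ → ℝ
  | [], t => t
  | b :: l, t => (b : ℝ) + 1 / valExt l t

lemma valExt_nil (t : ℝ) : valExt [] t = t := rfl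

lemma valExt_cons (b : ℕ) (l : List ℕ) (t : ℝ) :
    valExt (b :: l) t = (b : ℝ) + 1 / valExt l t := rfl

lemma valExt_append (l₁ l₂ : List ℕ) (t : ℝ) :
    valExt (l₁ ++ l₂) t = valExt l₁ (valExt l₂ t) := by
  induction l₁ with
  | nil => rfl
  | cons b l ih => simp [valExt_cons, ih]

lemma cfVal_eq_valExt (l : List ℕ) : cfVal l = valExt l 0 := by
  induction l with
  | nil => rfl
  | cons b l ih => simp [cfVal, valExt_cons, ih]

lemma cfVal_append (l₁ l₂ : List ℕ) : cfVal (l₁ ++ l₂) = valExt l₁ (cfVal l₂) := by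
  rw [cfVal_eq_valExt, valExt_append, ← cfVal_eq_valExt]

/-- all letters in `[1, A]` -/
def GoodL (A : ℕ) (l : List ℕ) : Prop := ∀ b ∈ l, 1 ≤ b ∧ b ≤ A

noncomputable def rr (A : ℕ) : ℝ := (((A : ℝ) + 1) / ((A : ℝ) + 2)) ^ 2

lemma rr_pos (A : ℕ) : 0 < rr A := by
  have : (0:ℝ) < ((A : ℝ) + 1) / ((A : ℝ) + 2) := by positivity
  rw [rr]; positivity

lemma rr_lt_one (A : ℕ) : rr A < 1 := by
  have h : ((A : ℝ) + 1) / ((A : ℝ) + 2) < 1 := by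
    rw [div_lt_one (by positivity)]; linarith
  have h0 : (0:ℝ) < ((A : ℝ) + 1) / ((A : ℝ) + 2) := by positivity
  calc rr A < 1 ^ 2 := by
        apply pow_lt_pow_left₀ h h0.le (by norm_num)
      _ = 1 := one_pow 2

lemma one_le_inv_rr (A : ℕ) : 1 ≤ (rr A)⁻¹ :=
  (one_le_inv_iff₀.2 ⟨rr_pos A, (rr_lt_one A).le⟩)

lemma valExt_bounds {A : ℕ} {l : List ℕ} (hl : GoodL A l) {t : ℝ}
    (h1 : 1 ≤ t) (h2 : t ≤ (A : ℝ) + 1) :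
    1 ≤ valExt l t ∧ valExt l t ≤ (A : ℝ) + 1 := by
  induction l with
  | nil => exact ⟨h1, h2⟩
  | cons b l ih =>
    have hb := hl b List.mem_cons_self
    have ih' := ih (fun x hx => hl x (List.mem_cons_of_mem _ hx))
    have h0 : (0:ℝ) < valExt l t := lt_of_lt_of_le one_pos ih'.1
    have hb1 : (1:ℝ) ≤ (b:ℝ) := by exact_mod_cast hb.1
    have hb2 : (b:ℝ) ≤ (A:ℝ) := by exact_mod_cast hb.2
    have hinv1 : 0 ≤ 1 / valExt l t := by positivity
    have hinv2 : 1 / valExt l t ≤ 1 := by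
      rw [div_le_one h0]; exact ih'.1
    rw [valExt_cons]
    constructor <;> linarith

lemma valExt_cons_ge {A : ℕ} {b : ℕ} {l : List ℕ} (hl : GoodL A (b :: l)) {t : ℝ}
    (h1 : 1 ≤ t) (h2 : t ≤ (A : ℝ) + 1) :
    ((A:ℝ) + 2) / ((A:ℝ) + 1) ≤ valExt (b :: l) t := by
  have hb := hl b List.mem_cons_self
  have hb1 : (1:ℝ) ≤ (b:ℝ) := by exact_mod_cast hb.1
  have ih := valExt_bounds (fun x hx => hl x (List.mem_cons_of_mem _ hx)) h1 h2
  have h0 : (0:ℝ) < valExt l t := lt_of_lt_of_le one_pos ih.1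
  have hA0 : (0:ℝ) < (A:ℝ) + 1 := by positivity
  have : 1 / ((A:ℝ)+1) ≤ 1 / valExt l t := by
    apply one_div_le_one_div_of_le h0 ih.2
  rw [valExt_cons]
  have heq : ((A:ℝ)+2)/((A:ℝ)+1) = 1 + 1/((A:ℝ)+1) := by
    field_simp; ring
  rw [heq]
  linarith

lemma valExt_contract {A : ℕ} {l : List ℕ} (hl : GoodL A l) {s t : ℝ}
    (hs1 : 1 ≤ s) (hs2 : s ≤ (A:ℝ) + 1) (ht1 : 1 ≤ t) (ht2 : t ≤ (A:ℝ) + 1) :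
    |valExt l s - valExt l t| ≤ rr A ^ l.length * (rr A)⁻¹ * |s - t| := by
  induction l with
  | nil =>
    simp only [valExt_nil, List.length_nil, pow_zero, one_mul]
    nlinarith [abs_nonneg (s - t), one_le_inv_rr A]
  | cons b l ih =>
    have hgl : GoodL A l := fun x hx => hl x (List.mem_cons_of_mem _ hx)
    have hbs := valExt_bounds hgl hs1 hs2
    have hbt := valExt_bounds hgl ht1 ht2
    have hus : (0:ℝ) < valExt l s := lt_of_lt_of_le one_pos hbs.1
    have hut : (0:ℝ) < valExt l t := lt_of_lt_of_le one_pos hbt.1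
    have key : valExt (b :: l) s - valExt (b :: l) t
        = (valExt l t - valExt l s) / (valExt l s * valExt l t) := by
      rw [valExt_cons, valExt_cons]
      field_simp
      ring
    rw [key, abs_div, abs_of_pos (mul_pos hus hut), abs_sub_comm,
      div_le_iff₀ (mul_pos hus hut)]
    rcases l with _ | ⟨c, l'⟩
    · simp only [valExt_nil, List.length_cons, List.length_nil, zero_add, pow_one]
      rw [mul_inv_cancel₀ (rr_pos A).ne', one_mul]
      have hst : (0:ℝ) ≤ s * t - 1 := by nlinarith
      nlinarith [mul_nonneg (abs_nonneg (s - t)) hst]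
    · have hθs := valExt_cons_ge (A := A) hgl hs1 hs2
      have hθt := valExt_cons_ge (A := A) hgl ht1 ht2
      have hθ : (0:ℝ) < ((A:ℝ)+2)/((A:ℝ)+1) := by positivity
      have hprod : (rr A)⁻¹ ≤ valExt (c :: l') s * valExt (c :: l') t := by
        have hre : (rr A)⁻¹ = (((A:ℝ)+2)/((A:ℝ)+1))^2 := by
          rw [rr, ← inv_pow, inv_div]
        rw [hre, sq]
        exact mul_le_mul hθs hθt hθ.le (le_trans hθ.le hθs)
      have h1' : (1:ℝ) ≤ rr A * (valExt (c :: l') s * valExt (c :: l') t) := by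
        have := mul_le_mul_of_nonneg_left hprod (rr_pos A).le
        rwa [mul_inv_cancel₀ (rr_pos A).ne'] at this
      have ih' := ih hgl
      have habs : (0:ℝ) ≤ |valExt (c :: l') s - valExt (c :: l') t| := abs_nonneg _
      calc |valExt (c :: l') s - valExt (c :: l') t|
          ≤ |valExt (c :: l') s - valExt (c :: l') t|
            * (rr A * (valExt (c :: l') s * valExt (c :: l') t)) := by
            nlinarith [mul_nonneg habs (sub_nonneg.2 h1')]
        _ = (|valExt (c :: l') s - valExt (c :: l') t| * rr A)
            * (valExt (c :: l') s * valExt (c :: l') t) := by ring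
        _ ≤ (rr A ^ (c :: l').length * (rr A)⁻¹ * |s - t| * rr A)
            * (valExt (c :: l') s * valExt (c :: l') t) := by
            apply mul_le_mul_of_nonneg_right _ (mul_pos hus hut).le
            exact mul_le_mul_of_nonneg_right ih' (rr_pos A).le
        _ = rr A ^ (b :: c :: l').length * (rr A)⁻¹ * |s - t|
            * (valExt (c :: l') s * valExt (c :: l') t) := by
            rw [List.length_cons, List.length_cons, List.length_cons]
            ring


/-- auxiliary constant for error bounds -/
noncomputable def dd (A k : ℕ) : ℝ := ((A:ℝ) + 1) * (rr A ^ k * (rr A)⁻¹ * (rr A)⁻¹)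

lemma dd_pos (A k : ℕ) : 0 < dd A k := by
  have := rr_pos A
  rw [dd]; positivity

lemma valExt_concat (w : List ℕ) (b : ℕ) (t : ℝ) :
    valExt (w ++ [b]) t = valExt w ((b:ℝ) + 1 / t) := by
  rw [valExt_append, valExt_cons, valExt_nil]

lemma cfVal_concat (w : List ℕ) (b : ℕ) :
    cfVal (w ++ [b]) = valExt w (b:ℝ) := by
  rw [cfVal_eq_valExt, valExt_concat]
  norm_num

lemma cfVal_bounds {A : ℕ} {l : List ℕ} (hl : GoodL A l) (hne : l ≠ []) :
    1 ≤ cfVal l ∧ cfVal l ≤ (A:ℝ) + 1 := by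
  rcases (List.eq_nil_or_concat l).resolve_left hne with ⟨w, b, rfl⟩
  simp only [List.concat_eq_append] at hl hne ⊢
  rw [cfVal_concat]
  have hb := hl b (by simp)
  have hb1 : (1:ℝ) ≤ (b:ℝ) := by exact_mod_cast hb.1
  have hb2 : (b:ℝ) ≤ (A:ℝ) := by exact_mod_cast hb.2
  exact valExt_bounds (fun x hx => hl x (by simp [hx])) hb1 (by linarith)

lemma valExt_sub_cfVal {A : ℕ} {l : List ℕ} (hl : GoodL A l) (hne : l ≠ []) {s : ℝ}
    (hs1 : 1 ≤ s) (hs2 : s ≤ (A:ℝ) + 1) :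
    |valExt l s - cfVal l| ≤ rr A ^ l.length * (rr A)⁻¹ * (rr A)⁻¹ := by
  rcases (List.eq_nil_or_concat l).resolve_left hne with ⟨w, b, rfl⟩
  simp only [List.concat_eq_append] at hl hne ⊢
  rw [cfVal_concat, valExt_concat]
  have hgw : GoodL A w := fun x hx => hl x (by simp [hx])
  have hb := hl b (by simp)
  have hb1 : (1:ℝ) ≤ (b:ℝ) := by exact_mod_cast hb.1
  have hb2 : (b:ℝ) ≤ (A:ℝ) := by exact_mod_cast hb.2
  have hs0 : (0:ℝ) < s := lt_of_lt_of_le one_pos hs1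
  have h1s : 0 < 1 / s := by positivity
  have h1s1 : 1 / s ≤ 1 := by rw [div_le_one hs0]; exact hs1
  have hc := valExt_contract hgw (s := (b:ℝ) + 1/s) (t := (b:ℝ))
    (by linarith) (by linarith) hb1 (by linarith)
  have habs : |(b:ℝ) + 1/s - (b:ℝ)| = 1/s := by
    rw [add_sub_cancel_left, abs_of_pos h1s]
  rw [habs] at hc
  calc |valExt w ((b:ℝ) + 1/s) - valExt w (b:ℝ)|
      ≤ rr A ^ w.length * (rr A)⁻¹ * (1/s) := hc
    _ ≤ rr A ^ w.length * (rr A)⁻¹ * 1 := by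
        apply mul_le_mul_of_nonneg_left h1s1
          (mul_nonneg (pow_pos (rr_pos A) _).le (inv_pos.2 (rr_pos A)).le)
    _ = rr A ^ (w ++ [b]).length * (rr A)⁻¹ * (rr A)⁻¹ := by
        have h0 : rr A ≠ 0 := (rr_pos A).ne'
        rw [List.length_append, List.length_cons, List.length_nil, mul_one, pow_add, pow_one]
        field_simp

lemma repBlock_succ (l : List ℕ) (m : ℕ) : repBlock l (m + 1) = l ++ repBlock l m := rfl

lemma repBlock_one (l : List ℕ) : repBlock l 1 = l := by
  rw [repBlock_succ]; simp [repBlock]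

lemma repBlock_add (l : List ℕ) (m p : ℕ) :
    repBlock l (m + p) = repBlock l m ++ repBlock l p := by
  induction m with
  | zero => simp [repBlock]
  | succ m ih =>
    have : m + 1 + p = (m + p) + 1 := by omega
    rw [this, repBlock_succ, ih, repBlock_succ, List.append_assoc]

lemma length_repBlock (l : List ℕ) (m : ℕ) : (repBlock l m).length = m * l.length := by
  induction m with
  | zero => simp [repBlock]
  | succ m ih => rw [repBlock_succ, List.length_append, ih]; ring

lemma goodL_repBlock {A : ℕ} {l : List ℕ} (hl : GoodL A l) (m : ℕ) :
    GoodL A (repBlock l m) := by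
  induction m with
  | zero => intro b hb; simp [repBlock] at hb
  | succ m ih =>
    intro b hb
    rw [repBlock_succ, List.mem_append] at hb
    rcases hb with hb | hb
    · exact hl b hb
    · exact ih b hb

lemma repBlock_ne_nil {l : List ℕ} (hne : l ≠ []) {m : ℕ} (hm : 1 ≤ m) :
    repBlock l m ≠ [] := by
  rcases Nat.exists_eq_add_of_le hm with ⟨p, rfl⟩
  rw [add_comm, repBlock_succ]
  simp [hne]

/-- The main convergence lemma for periodic continued fractions. -/
lemma periodicVal_spec {A : ℕ} {l : List ℕ} (hl : GoodL A l) (hne : l ≠ []) :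
    Tendsto (fun m => cfVal (repBlock l m)) atTop (nhds (periodicVal l)) ∧
    1 ≤ periodicVal l ∧ periodicVal l ≤ (A:ℝ) + 1 := by
  set x : ℕ → ℝ := fun m => cfVal (repBlock l m) with hx
  have hk1 : 1 ≤ l.length := List.length_pos_of_ne_nil hne
  set r : ℝ := rr A ^ l.length with hr
  have hr0 : 0 < r := pow_pos (rr_pos A) _
  have hr1 : r < 1 := pow_lt_one₀ (rr_pos A).le (rr_lt_one A) (by omega)
  set C : ℝ := ((A:ℝ) + 1) * (rr A)⁻¹ * r⁻¹ with hC
  have hbnd : ∀ m : ℕ, 1 ≤ m → 1 ≤ x m ∧ x m ≤ (A:ℝ) + 1 := fun m hm =>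
    cfVal_bounds (goodL_repBlock hl m) (repBlock_ne_nil hne hm)
  have hdist : ∀ n, dist (x n) (x (n + 1)) ≤ C * r ^ n := by
    intro n
    rcases n with _ | m
    · -- n = 0 : x 0 = cfVal [] = 0
      have h1 := hbnd 1 le_rfl
      have hx0 : x 0 = 0 := by simp [hx, repBlock, cfVal]
      rw [Real.dist_eq, hx0, pow_zero, mul_one]
      have hC1 : ((A:ℝ) + 1) ≤ C := by
        rw [hC]
        have h2 : 1 ≤ (rr A)⁻¹ := one_le_inv_rr A
        have h3 : 1 ≤ r⁻¹ := one_le_inv_iff₀.2 ⟨hr0, hr1.le⟩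
        have h4 : 1 ≤ (rr A)⁻¹ * r⁻¹ := by nlinarith
        nlinarith [mul_nonneg (by positivity : (0:ℝ) ≤ (A:ℝ)+1) (sub_nonneg.2 h4)]
      rw [abs_sub_comm, abs_of_nonneg (by linarith [h1.1] : (0:ℝ) ≤ x 1 - 0)]
      linarith [h1.2]
    · -- n = m + 1
      have e1 : x (m + 1) = valExt (repBlock l m) (cfVal (repBlock l 1)) := by
        show cfVal (repBlock l (m + 1)) = _
        rw [(by omega : m + 1 = m + 1), repBlock_add l m 1, cfVal_append]
      have e2 : x (m + 2) = valExt (repBlock l m) (cfVal (repBlock l 2)) := by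
        show cfVal (repBlock l (m + 2)) = _
        rw [(by omega : m + 2 = m + 2), repBlock_add l m 2, cfVal_append]
      have hs := cfVal_bounds (goodL_repBlock hl 1) (repBlock_ne_nil hne le_rfl)
      have ht := cfVal_bounds (goodL_repBlock hl 2) (repBlock_ne_nil hne (by omega))
      have hcon := valExt_contract (goodL_repBlock hl m)
        hs.1 hs.2 ht.1 ht.2
      rw [Real.dist_eq, e1, e2]
      have habs : |cfVal (repBlock l 1) - cfVal (repBlock l 2)| ≤ (A:ℝ) := by
        rw [abs_le]
        constructor <;> nlinarith [hs.1, hs.2, ht.1, ht.2,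
          (by exact_mod_cast Nat.zero_le A : (0:ℝ) ≤ (A:ℝ))]
      calc |valExt (repBlock l m) (cfVal (repBlock l 1))
            - valExt (repBlock l m) (cfVal (repBlock l 2))|
          ≤ rr A ^ (repBlock l m).length * (rr A)⁻¹
            * |cfVal (repBlock l 1) - cfVal (repBlock l 2)| := hcon
        _ ≤ rr A ^ (repBlock l m).length * (rr A)⁻¹ * ((A:ℝ) + 1) := by
            apply mul_le_mul_of_nonneg_left _
              (mul_nonneg (pow_pos (rr_pos A) _).le (inv_pos.2 (rr_pos A)).le)
            linarith
        _ = C * r ^ (m + 1) := by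
            rw [length_repBlock, mul_comm m l.length, pow_mul, ← hr, hC, pow_succ]
            have h1 : r ≠ 0 := hr0.ne'
            have h2 : rr A ≠ 0 := (rr_pos A).ne'
            field_simp
  have hcauchy : CauchySeq x := cauchySeq_of_le_geometric r C hr1 hdist
  obtain ⟨a, ha⟩ := cauchySeq_tendsto_of_complete hcauchy
  have hlim : periodicVal l = a := by
    rw [periodicVal]
    exact ha.limUnder_eq
  rw [hlim]
  refine ⟨ha, ?_, ?_⟩
  · apply ge_of_tendsto (ha.comp (tendsto_add_atTop_nat 1))
    filter_upwards with m
    exact (hbnd (m + 1) (by omega)).1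
  · apply le_of_tendsto (ha.comp (tendsto_add_atTop_nat 1))
    filter_upwards with m
    exact (hbnd (m + 1) (by omega)).2

lemma periodicVal_take {A : ℕ} {l : List ℕ} (hl : GoodL A l) (hne : l ≠ []) {k : ℕ}
    (hk1 : 1 ≤ k) (hk2 : k ≤ l.length) :
    |periodicVal l - cfVal (l.take k)| ≤ dd A k := by
  obtain ⟨ha, h1, h2⟩ := periodicVal_spec hl hne
  have htk : (l.take k).length = k := by
    rw [List.length_take]; omega
  have htkne : l.take k ≠ [] := by
    intro h
    rw [h] at htk
    simp at htk
    omega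
  have hgtk : GoodL A (l.take k) := fun b hb => hl b (List.mem_of_mem_take hb)
  -- for each m, bound |x (m+2) - cfVal (take k l)|
  have key : ∀ m : ℕ, |cfVal (repBlock l (m + 2)) - cfVal (l.take k)| ≤ dd A k := by
    intro m
    have hsplit : repBlock l (m + 2) = l.take k ++ (l.drop k ++ repBlock l (m + 1)) := by
      have : repBlock l (m + 2) = l ++ repBlock l (m + 1) := rfl
      rw [this, ← List.take_append_drop k l, List.append_assoc, List.take_append_drop]
    have hrest : GoodL A (l.drop k ++ repBlock l (m + 1)) := by
      intro b hb
      rw [List.mem_append] at hb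
      rcases hb with hb | hb
      · exact hl b (List.mem_of_mem_drop hb)
      · exact goodL_repBlock hl (m+1) b hb
    have hrestne : l.drop k ++ repBlock l (m + 1) ≠ [] := by
      intro h
      rcases List.append_eq_nil_iff.1 h with ⟨-, h2⟩
      exact repBlock_ne_nil hne (by omega) h2
    have hs := cfVal_bounds hrest hrestne
    rw [hsplit, cfVal_append]
    calc |valExt (l.take k) (cfVal (l.drop k ++ repBlock l (m+1))) - cfVal (l.take k)|
        ≤ rr A ^ (l.take k).length * (rr A)⁻¹ * (rr A)⁻¹ :=
          valExt_sub_cfVal hgtk htkne hs.1 hs.2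
      _ ≤ dd A k := by
          rw [htk, dd]
          nlinarith [rr_pos A, one_le_inv_rr A, pow_pos (rr_pos A) k,
            (by exact_mod_cast Nat.zero_le A : (0:ℝ) ≤ (A:ℝ)),
            mul_pos (pow_pos (rr_pos A) k) (mul_pos (inv_pos.2 (rr_pos A)) (inv_pos.2 (rr_pos A)))]
  have htend : Tendsto (fun m => |cfVal (repBlock l (m + 2)) - cfVal (l.take k)|) atTop
      (nhds (|periodicVal l - cfVal (l.take k)|)) := by
    exact ((ha.comp (tendsto_add_atTop_nat 2)).sub_const _).abs
  exact le_of_tendsto htend (Eventually.of_forall key)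

lemma abs_log_sub_log_le {a b : ℝ} (ha : 1 ≤ a) (hb : 1 ≤ b) :
    |Real.log a - Real.log b| ≤ |a - b| := by
  have key : ∀ u v : ℝ, 1 ≤ u → 1 ≤ v → v ≤ u → Real.log u - Real.log v ≤ u - v := by
    intro u v hu hv huv
    have hv0 : (0:ℝ) < v := lt_of_lt_of_le one_pos hv
    have hu0 : (0:ℝ) < u := lt_of_lt_of_le one_pos hu
    have h1 : Real.log u - Real.log v = Real.log (u / v) := (Real.log_div hu0.ne' hv0.ne').symm
    have h2 : Real.log (u / v) ≤ u / v - 1 := Real.log_le_sub_one_of_pos (by positivity)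
    have h3 : u / v - 1 ≤ u - v := by
      rw [div_sub_one hv0.ne', div_le_iff₀ hv0]
      nlinarith
    linarith
  rcases le_total b a with h | h
  · have hlog : Real.log b ≤ Real.log a := Real.log_le_log (by linarith) h
    rw [abs_of_nonneg (by linarith), abs_of_nonneg (by linarith)]
    exact key a b ha hb h
  · have hlog : Real.log a ≤ Real.log b := Real.log_le_log (by linarith) h
    rw [abs_sub_comm, abs_sub_comm a b, abs_of_nonneg (by linarith), abs_of_nonneg (by linarith)]
    exact key b a hb ha h


lemma goodL_toList {A n : ℕ} (w : Word A n) : GoodL A (toList w) := by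
  intro b hb
  rw [toList, List.mem_ofFn] at hb
  obtain ⟨i, rfl⟩ := hb
  exact ⟨Nat.le_add_left 1 _, (w i).isLt⟩

lemma length_toList {A n : ℕ} (w : Word A n) : (toList w).length = n := by
  rw [toList, List.length_ofFn]

lemma toList_ne_nil {A n : ℕ} (hn : 0 < n) (w : Word A n) : toList w ≠ [] := by
  intro h
  have := length_toList w
  rw [h] at this
  simp at this
  omega

def win {A N : ℕ} (k j : ℕ) (hN : 0 < N) (α : Word A N) : Word A k :=
  fun i => α ⟨(i.1 + j) % N, Nat.mod_lt _ hN⟩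

lemma toList_win {A N k j : ℕ} (hN : 0 < N) (hkN : k ≤ N) (α : Word A N) :
    toList (win k j hN α) = (toList (shift j α)).take k := by
  apply List.ext_getElem
  · rw [length_toList, List.length_take, length_toList]
    omega
  · intro i h1 h2
    rw [length_toList] at h1
    simp only [List.getElem_take, toList, List.getElem_ofFn]
    rfl

lemma one_le_cfVal_word {A n : ℕ} (hn : 0 < n) (w : Word A n) :
    1 ≤ cfVal (toList w) ∧ cfVal (toList w) ≤ (A:ℝ) + 1 :=
  cfVal_bounds (goodL_toList w) (toList_ne_nil hn w)

lemma log_word_bounds {A n : ℕ} (hn : 0 < n) (w : Word A n) :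
    0 ≤ Real.log (cfVal (toList w)) ∧ Real.log (cfVal (toList w)) ≤ Real.log ((A:ℝ) + 1) := by
  obtain ⟨h1, h2⟩ := one_le_cfVal_word hn w
  exact ⟨Real.log_nonneg h1, Real.log_le_log (by linarith) h2⟩

lemma one_le_Tpow {A N : ℕ} (hN : 0 < N) (α : Word A N) (j : ℕ) :
    1 ≤ Tpow α j ∧ Tpow α j ≤ (A:ℝ) + 1 := by
  obtain ⟨-, h1, h2⟩ := periodicVal_spec (goodL_toList (shift j α)) (toList_ne_nil hN _)
  exact ⟨h1, h2⟩

lemma log_Tpow_sub {A N k : ℕ} (hN : 0 < N) (hk1 : 1 ≤ k) (hkN : k ≤ N)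
    (α : Word A N) (j : ℕ) :
    |Real.log (Tpow α j) - Real.log (cfVal (toList (win k j hN α)))| ≤ dd A k := by
  have hgl := goodL_toList (shift j α)
  have hne := toList_ne_nil hN (shift j α)
  have hlen : (toList (shift j α)).length = N := length_toList _
  have htake := periodicVal_take hgl hne hk1 (by omega)
  rw [← toList_win hN hkN α] at htake
  have h1 := (one_le_Tpow hN α j).1
  have h2 := (one_le_cfVal_word hk1 (win k j hN α)).1
  calc |Real.log (Tpow α j) - Real.log (cfVal (toList (win k j hN α)))|
      ≤ |Tpow α j - cfVal (toList (win k j hN α))| := abs_log_sub_log_le h1 h2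
    _ ≤ dd A k := htake


open Finset in
lemma sum_comp_inj {A N : ℕ} {γ : Type} [Fintype γ] [DecidableEq γ]
    (ι : γ → Fin N) (hinj : Function.Injective ι) (F : (γ → Fin A) → ℝ) :
    ∑ α : Fin N → Fin A, F (fun t => α (ι t))
      = (A : ℝ) ^ (N - Fintype.card γ) * ∑ w : γ → Fin A, F w := by
  classical
  set p : Fin N → Prop := fun x => x ∈ Set.range ι with hp
  let e := Equiv.piEquivPiSubtypeProd p (fun _ => Fin A)
  rw [← Equiv.sum_comp e.symm (fun α => F (fun t => α (ι t)))]
  have he : ∀ (q : ({x // p x} → Fin A) × ({x // ¬ p x} → Fin A)) (t : γ),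
      e.symm q (ι t) = q.1 ⟨ι t, ⟨t, rfl⟩⟩ := by
    intro q t
    simp only [e, Equiv.piEquivPiSubtypeProd_symm_apply]
    rw [dif_pos]
    exact Set.mem_range_self t
  have step1 : ∑ q : ({x // p x} → Fin A) × ({x // ¬ p x} → Fin A),
      F (fun t => e.symm q (ι t))
      = ∑ q : ({x // p x} → Fin A) × ({x // ¬ p x} → Fin A),
        F (fun t => q.1 ⟨ι t, ⟨t, rfl⟩⟩) := by
    apply Finset.sum_congr rfl
    intro q _
    congr 1
    funext t
    exact he q t
  rw [step1, Fintype.sum_prod_type]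
  have step2 : ∀ f : {x // p x} → Fin A,
      ∑ _g : {x // ¬ p x} → Fin A, F (fun t => f ⟨ι t, ⟨t, rfl⟩⟩)
      = (A:ℝ) ^ (N - Fintype.card γ) * F (fun t => f ⟨ι t, ⟨t, rfl⟩⟩) := by
    intro f
    rw [Finset.sum_const, Finset.card_univ]
    have hcard : Fintype.card ({x // ¬ p x} → Fin A) = A ^ (N - Fintype.card γ) := by
      rw [Fintype.card_fun, Fintype.card_fin]
      congr 1
      rw [Fintype.card_subtype_compl]
      congr 1
      · exact Fintype.card_fin N
      · exact Set.card_range_of_injective hinj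
    rw [hcard, nsmul_eq_mul]
    push_cast
    ring
  rw [Finset.sum_congr rfl (fun f _ => step2 f), ← Finset.mul_sum]
  congr 1
  have hΦ : Function.Bijective
      (fun (f : {x // p x} → Fin A) => (fun t => f ⟨ι t, ⟨t, rfl⟩⟩ : γ → Fin A)) := by
    constructor
    · intro f f' h
      funext x
      obtain ⟨x, hx⟩ := x
      obtain ⟨t, rfl⟩ := hx
      exact congrFun h t
    · intro g
      refine ⟨fun x => g ((Equiv.ofInjective ι hinj).symm x), ?_⟩
      funext t
      simp
  exact Fintype.sum_bijective _ hΦ _ F (fun f => rfl)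


def wiota (k c N : ℕ) (hN : 0 < N) : Fin k → Fin N :=
  fun t => ⟨(t.1 + c) % N, Nat.mod_lt _ hN⟩

lemma win_eq_wiota {A N k c : ℕ} (hN : 0 < N) (α : Word A N) :
    win k c hN α = fun t => α (wiota k c N hN t) := rfl

lemma wiota_inj {k c N : ℕ} (hN : 0 < N) (hkN : k ≤ N) :
    Function.Injective (wiota k c N hN) := by
  intro t₁ t₂ h
  have h0 : (t₁.1 + c) % N = (t₂.1 + c) % N := congrArg Fin.val h
  have h1 : Nat.ModEq N (t₁.1 + c) (t₂.1 + c) := h0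
  have h2 : Nat.ModEq N t₁.1 t₂.1 := Nat.ModEq.add_right_cancel (Nat.ModEq.refl c) h1
  have h3 : t₁.1 % N = t₂.1 % N := h2
  rw [Nat.mod_eq_of_lt (by omega : t₁.1 < N), Nat.mod_eq_of_lt (by omega : t₂.1 < N)] at h3
  exact Fin.ext h3

lemma wiota_disjoint {k c c' N : ℕ} (hN : 0 < N) (hkN : k ≤ N) (hc : c ≤ N)
    (hd1 : k ≤ (c' + N - c) % N) (hd2 : (c' + N - c) % N + k ≤ N)
    (t₁ t₂ : Fin k) : wiota k c N hN t₁ ≠ wiota k c' N hN t₂ := by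
  intro h
  set d := (c' + N - c) % N with hd
  have h0 : (t₁.1 + c) % N = (t₂.1 + c') % N := congrArg Fin.val h
  have h1 : Nat.ModEq N (t₁.1 + c) (t₂.1 + c') := h0
  have h2 := h1.add_right (N - c)
  have e1 : t₁.1 + c + (N - c) = t₁.1 + N := by omega
  have e2 : t₂.1 + c' + (N - c) = t₂.1 + (c' + N - c) := by omega
  rw [e1, e2] at h2
  have h3 : Nat.ModEq N (t₁.1 + N) t₁.1 := Nat.add_mod_right t₁.1 N
  have h4 : Nat.ModEq N (c' + N - c) d := (Nat.mod_modEq _ N).symm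
  have h5 : Nat.ModEq N t₁.1 (t₂.1 + d) :=
    (h3.symm.trans h2).trans ((Nat.ModEq.refl t₂.1).add h4)
  have h6 : t₁.1 % N = (t₂.1 + d) % N := h5
  rw [Nat.mod_eq_of_lt (by omega : t₁.1 < N), Nat.mod_eq_of_lt (by omega : t₂.1 + d < N)] at h6
  omega

open Finset in
lemma cheb_count {β : Type} [Fintype β] (Y : β → ℝ) (m t : ℝ) (ht : 0 < t)
    (P : β → Prop) [DecidablePred P] (hP : ∀ b, P b → t < |Y b - m|) :
    ((univ.filter P).card : ℝ) * t ^ 2 ≤ ∑ b : β, (Y b - m) ^ 2 := by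
  calc ((univ.filter P).card : ℝ) * t ^ 2 = ∑ _b ∈ univ.filter P, t ^ 2 := by
        rw [Finset.sum_const, nsmul_eq_mul]
    _ ≤ ∑ b ∈ univ.filter P, (Y b - m) ^ 2 := by
        apply Finset.sum_le_sum
        intro b hb
        have h1 := hP b (Finset.mem_filter.1 hb).2
        have h2 : t ≤ |Y b - m| := h1.le
        calc t ^ 2 ≤ |Y b - m| ^ 2 := by
              apply pow_le_pow_left₀ ht.le h2
          _ = (Y b - m) ^ 2 := sq_abs _
    _ ≤ ∑ b : β, (Y b - m) ^ 2 := by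
        apply Finset.sum_le_sum_of_subset_of_nonneg (Finset.filter_subset _ _)
        intro b _ _
        exact sq_nonneg _


open Finset in
lemma variance_bound {A N k : ℕ} (hA : 0 < A) (hN : 0 < N) (hk1 : 1 ≤ k) (h2k : 2 * k ≤ N) :
    ∑ α : Word A N, ((∑ j : Fin N, (Real.log (cfVal (toList (win k (j.1+1) hN α)))
        - (∑ w : Word A k, Real.log (cfVal (toList w))) / (A:ℝ)^k)))^2
      ≤ (N:ℝ) * (2*k) * (A:ℝ)^N * (Real.log ((A:ℝ)+1))^2 := by
  classical
  have hkN : k ≤ N := by omega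
  have hA0 : ((A:ℝ)) ≠ 0 := by positivity
  set Lf : Word A k → ℝ := fun w => Real.log (cfVal (toList w)) with hLf
  set T : ℝ := ∑ w : Word A k, Lf w with hT
  set μ : ℝ := T / (A:ℝ)^k with hμ
  set M : ℝ := Real.log ((A:ℝ)+1) with hM
  set Z : Fin N → Word A N → ℝ := fun j α => Lf (win k (j.1+1) hN α) - μ with hZ
  have cardWN : (Fintype.card (Word A N) : ℝ) = (A:ℝ)^N := by
    rw [Fintype.card_fun, Fintype.card_fin, Fintype.card_fin]
    push_cast
    rfl
  have cardWk : (Fintype.card (Word A k) : ℝ) = (A:ℝ)^k := by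
    rw [Fintype.card_fun, Fintype.card_fin, Fintype.card_fin]
    push_cast
    rfl
  -- bounds on Lf and μ
  have hLfb : ∀ w : Word A k, 0 ≤ Lf w ∧ Lf w ≤ M := fun w => log_word_bounds hk1 w
  have hTb : 0 ≤ T ∧ T ≤ (A:ℝ)^k * M := by
    constructor
    · exact Finset.sum_nonneg (fun w _ => (hLfb w).1)
    · calc T ≤ ∑ _w : Word A k, M := Finset.sum_le_sum (fun w _ => (hLfb w).2)
        _ = (A:ℝ)^k * M := by
          rw [Finset.sum_const, nsmul_eq_mul, Finset.card_univ, cardWk]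
  have hM0 : 0 ≤ M := Real.log_nonneg (by push_cast; linarith [Nat.zero_le A])
  have hμb : 0 ≤ μ ∧ μ ≤ M := by
    constructor
    · apply div_nonneg hTb.1 (by positivity)
    · rw [hμ, div_le_iff₀ (by positivity)]
      calc T ≤ (A:ℝ)^k * M := hTb.2
        _ = M * (A:ℝ)^k := by ring
  have hZb : ∀ j α, |Z j α| ≤ M := by
    intro j α
    have h1 := hLfb (win k (j.1+1) hN α)
    rw [hZ, abs_le]
    constructor <;> simp only <;> [linarith [h1.1, hμb.2]; linarith [h1.2, hμb.1]]
  -- single window sums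
  have single : ∀ c : ℕ, ∑ α : Word A N, Lf (win k c hN α) = (A:ℝ)^(N-k) * T := by
    intro c
    have := sum_comp_inj (A := A) (wiota k c N hN) (wiota_inj hN hkN) Lf
    rw [Fintype.card_fin] at this
    exact this
  -- pair sums for disjoint windows
  have pair : ∀ i j : Fin N,
      k ≤ (j.1 + 1 + N - (i.1+1)) % N → (j.1 + 1 + N - (i.1+1)) % N + k ≤ N →
      ∑ α : Word A N, Lf (win k (i.1+1) hN α) * Lf (win k (j.1+1) hN α)
        = (A:ℝ)^(N-2*k) * T^2 := by
    intro i j hd1 hd2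
    have hinj : Function.Injective
        (Sum.elim (wiota k (i.1+1) N hN) (wiota k (j.1+1) N hN)) := by
      apply Function.Injective.sumElim (wiota_inj hN hkN) (wiota_inj hN hkN)
      intro t₁ t₂
      exact wiota_disjoint hN hkN (by omega) hd1 hd2 t₁ t₂
    have := sum_comp_inj (A := A) _ hinj
      (fun w => Lf (fun t => w (Sum.inl t)) * Lf (fun t => w (Sum.inr t)))
    rw [Fintype.card_sum, Fintype.card_fin] at this
    have hgoal : ∑ α : Word A N, Lf (win k (i.1+1) hN α) * Lf (win k (j.1+1) hN α)
        = ∑ α : Word A N, (fun w : Fin k ⊕ Fin k → Fin A =>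
            Lf (fun t => w (Sum.inl t)) * Lf (fun t => w (Sum.inr t)))
          (fun t => α (Sum.elim (wiota k (i.1+1) N hN) (wiota k (j.1+1) N hN) t)) := rfl
    rw [hgoal, this]
    have hsum : ∑ w : Fin k ⊕ Fin k → Fin A,
        Lf (fun t => w (Sum.inl t)) * Lf (fun t => w (Sum.inr t)) = T^2 := by
      let e := (Equiv.sumArrowEquivProdArrow (Fin k) (Fin k) (Fin A))
      rw [← Equiv.sum_comp e.symm (fun w => Lf (fun t => w (Sum.inl t)) * Lf (fun t => w (Sum.inr t)))]
      have : ∀ q : (Fin k → Fin A) × (Fin k → Fin A),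
          (fun t => e.symm q (Sum.inl t)) = q.1 ∧ (fun t => e.symm q (Sum.inr t)) = q.2 := by
        intro q
        constructor <;> rfl
      calc ∑ q : (Fin k → Fin A) × (Fin k → Fin A),
            Lf (fun t => e.symm q (Sum.inl t)) * Lf (fun t => e.symm q (Sum.inr t))
          = ∑ q : (Fin k → Fin A) × (Fin k → Fin A), Lf q.1 * Lf q.2 := by
            apply Finset.sum_congr rfl
            intro q _
            rw [(this q).1, (this q).2]
        _ = T^2 := by
            rw [Fintype.sum_prod_type]
            rw [sq, hT]
            rw [← Finset.sum_mul_sum]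
    rw [hsum]
    congr 2
    omega
  -- covariance vanishes for far pairs
  have covzero : ∀ i j : Fin N,
      k ≤ (j.1 + 1 + N - (i.1+1)) % N → (j.1 + 1 + N - (i.1+1)) % N + k ≤ N →
      ∑ α : Word A N, Z i α * Z j α = 0 := by
    intro i j hd1 hd2
    have expand : ∀ α : Word A N, Z i α * Z j α
        = Lf (win k (i.1+1) hN α) * Lf (win k (j.1+1) hN α)
          - μ * Lf (win k (i.1+1) hN α) - μ * Lf (win k (j.1+1) hN α) + μ^2 := by
      intro α
      rw [hZ]
      ring
    rw [Finset.sum_congr rfl (fun α _ => expand α)]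
    rw [Finset.sum_add_distrib, Finset.sum_sub_distrib, Finset.sum_sub_distrib,
      ← Finset.mul_sum, ← Finset.mul_sum, pair i j hd1 hd2, single, single,
      Finset.sum_const, nsmul_eq_mul, Finset.card_univ, cardWN]
    have e1 : (A:ℝ)^(N-2*k) = (A:ℝ)^N / (A:ℝ)^(2*k) := by
      rw [eq_div_iff (by positivity), ← pow_add]
      congr 1
      omega
    have e2 : (A:ℝ)^(N-k) = (A:ℝ)^N / (A:ℝ)^k := by
      rw [eq_div_iff (by positivity), ← pow_add]
      congr 1
      omega
    rw [e1, e2, hμ]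
    have h2k' : (A:ℝ)^(2*k) = (A:ℝ)^k * (A:ℝ)^k := by
      rw [← pow_add]
      congr 1
      omega
    rw [h2k']
    field_simp
    ring
  -- always bound
  have covbd : ∀ i j : Fin N, ∑ α : Word A N, Z i α * Z j α ≤ (A:ℝ)^N * M^2 := by
    intro i j
    calc ∑ α : Word A N, Z i α * Z j α ≤ ∑ _α : Word A N, M^2 := by
          apply Finset.sum_le_sum
          intro α _
          calc Z i α * Z j α ≤ |Z i α * Z j α| := le_abs_self _
            _ = |Z i α| * |Z j α| := abs_mul _ _
            _ ≤ M * M := mul_le_mul (hZb i α) (hZb j α) (abs_nonneg _) hM0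
            _ = M^2 := (sq M).symm
      _ = (A:ℝ)^N * M^2 := by
          rw [Finset.sum_const, nsmul_eq_mul, Finset.card_univ, cardWN]
  -- counting near pairs
  have countbd : ∀ i : Fin N,
      ((univ.filter (fun j : Fin N => ¬(k ≤ (j.1 + 1 + N - (i.1+1)) % N
        ∧ (j.1 + 1 + N - (i.1+1)) % N + k ≤ N))).card : ℝ) ≤ 2*k := by
    intro i
    set g : Fin N → Fin N := fun j => ⟨(j.1 + 1 + N - (i.1+1)) % N, Nat.mod_lt _ hN⟩ with hg
    have hginj : Function.Injective g := by
      intro j₁ j₂ h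
      have h0 : (j₁.1 + 1 + N - (i.1+1)) % N = (j₂.1 + 1 + N - (i.1+1)) % N :=
        congrArg Fin.val h
      have h1 : Nat.ModEq N (j₁.1 + 1 + N - (i.1+1)) (j₂.1 + 1 + N - (i.1+1)) := h0
      have h2 := h1.add_right (i.1+1)
      have e1 : j₁.1 + 1 + N - (i.1+1) + (i.1+1) = j₁.1 + 1 + N := by omega
      have e2 : j₂.1 + 1 + N - (i.1+1) + (i.1+1) = j₂.1 + 1 + N := by omega
      rw [e1, e2] at h2
      have h3 : Nat.ModEq N (j₁.1+1) (j₂.1+1) :=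
        ((Nat.add_mod_right (j₁.1+1) N).symm.trans h2).trans (Nat.add_mod_right (j₂.1+1) N)
      have h4 : Nat.ModEq N j₁.1 j₂.1 := Nat.ModEq.add_right_cancel (Nat.ModEq.refl 1) h3
      have h5 : j₁.1 % N = j₂.1 % N := h4
      rw [Nat.mod_eq_of_lt j₁.isLt, Nat.mod_eq_of_lt j₂.isLt] at h5
      exact Fin.ext h5
    have hmap : ∀ j ∈ univ.filter (fun j : Fin N => ¬(k ≤ (j.1 + 1 + N - (i.1+1)) % N
        ∧ (j.1 + 1 + N - (i.1+1)) % N + k ≤ N)),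
        g j ∈ univ.filter (fun d : Fin N => d.1 < k ∨ N < d.1 + k) := by
      intro j hj
      rw [Finset.mem_filter] at hj ⊢
      refine ⟨Finset.mem_univ _, ?_⟩
      have h2 := hj.2
      have hgv : (g j).1 = (j.1 + 1 + N - (i.1+1)) % N := rfl
      omega
    have hcard1 := Finset.card_le_card_of_injOn g hmap (hginj.injOn)
    have hcard2 : (univ.filter (fun d : Fin N => d.1 < k ∨ N < d.1 + k)).card ≤ 2 * k := by
      rw [Finset.filter_or]
      apply le_trans (Finset.card_union_le _ _)
      have hc1 : (univ.filter (fun d : Fin N => d.1 < k)).card ≤ k := by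
        have hsub := Finset.card_le_card_of_injOn (f := fun d : Fin N => d.1)
          (s := univ.filter (fun d : Fin N => d.1 < k))
          (t := Finset.range k)
          (by intro d hd; rw [Finset.mem_coe, Finset.mem_range]; exact (Finset.mem_filter.1 hd).2)
          (Fin.val_injective.injOn)
        rwa [Finset.card_range] at hsub
      have hc2 : (univ.filter (fun d : Fin N => N < d.1 + k)).card ≤ k := by
        have hsub := Finset.card_le_card_of_injOn (f := fun d : Fin N => d.1)
          (s := univ.filter (fun d : Fin N => N < d.1 + k))
          (t := Finset.Ico (N+1-k) N)
          (by intro d hd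
              rw [Finset.mem_coe, Finset.mem_Ico]
              have h1 := (Finset.mem_filter.1 hd).2
              have h2 := d.isLt
              show N + 1 - k ≤ d.1 ∧ d.1 < N
              omega)
          (Fin.val_injective.injOn)
        rw [Nat.card_Ico] at hsub
        omega
      omega
    calc ((univ.filter (fun j : Fin N => ¬(k ≤ (j.1 + 1 + N - (i.1+1)) % N
          ∧ (j.1 + 1 + N - (i.1+1)) % N + k ≤ N))).card : ℝ)
        ≤ ((univ.filter (fun d : Fin N => d.1 < k ∨ N < d.1 + k)).card : ℝ) := by
          exact_mod_cast hcard1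
      _ ≤ 2*k := by exact_mod_cast hcard2
  -- put it together
  have expand2 : ∑ α : Word A N, (∑ j : Fin N, Z j α)^2
      = ∑ i : Fin N, ∑ j : Fin N, ∑ α : Word A N, Z i α * Z j α := by
    have : ∀ α : Word A N, (∑ j : Fin N, Z j α)^2
        = ∑ i : Fin N, ∑ j : Fin N, Z i α * Z j α := by
      intro α
      rw [sq, Finset.sum_mul_sum]
    rw [Finset.sum_congr rfl (fun α _ => this α), Finset.sum_comm]
    apply Finset.sum_congr rfl
    intro i _
    rw [Finset.sum_comm]
  have final : ∑ i : Fin N, ∑ j : Fin N, ∑ α : Word A N, Z i α * Z j α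
      ≤ (N:ℝ) * (2*k) * ((A:ℝ)^N * M^2) := by
    calc ∑ i : Fin N, ∑ j : Fin N, ∑ α : Word A N, Z i α * Z j α
        ≤ ∑ i : Fin N, ∑ j : Fin N,
            (if (k ≤ (j.1 + 1 + N - (i.1+1)) % N ∧ (j.1 + 1 + N - (i.1+1)) % N + k ≤ N)
              then 0 else (A:ℝ)^N * M^2) := by
          apply Finset.sum_le_sum
          intro i _
          apply Finset.sum_le_sum
          intro j _
          by_cases hfar : k ≤ (j.1 + 1 + N - (i.1+1)) % N ∧ (j.1 + 1 + N - (i.1+1)) % N + k ≤ N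
          · rw [if_pos hfar, covzero i j hfar.1 hfar.2]
          · rw [if_neg hfar]
            exact covbd i j
      _ ≤ ∑ _i : Fin N, (2*k) * ((A:ℝ)^N * M^2) := by
          apply Finset.sum_le_sum
          intro i _
          rw [Finset.sum_ite, Finset.sum_const_zero, zero_add, Finset.sum_const, nsmul_eq_mul]
          apply mul_le_mul_of_nonneg_right _ (by positivity)
          · have := countbd i
            convert this using 3
      _ = (N:ℝ) * (2*k) * ((A:ℝ)^N * M^2) := by
          rw [Finset.sum_const, nsmul_eq_mul, Finset.card_univ, Fintype.card_fin]
          ring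
  calc ∑ α : Word A N, (∑ j : Fin N, Z j α)^2
      = ∑ i : Fin N, ∑ j : Fin N, ∑ α : Word A N, Z i α * Z j α := expand2
    _ ≤ (N:ℝ) * (2*k) * ((A:ℝ)^N * M^2) := final
    _ = (N:ℝ) * (2*k) * (A:ℝ)^N * M^2 := by ring


open Finset in
lemma cs_exists (A : ℕ) (hA : 0 < A) :
    ∃ c : ℝ, Tendsto
      (fun k : ℕ => 2 / (A : ℝ) ^ k * ∑ w : Word A k, Real.log (cfVal (toList w)))
      atTop (nhds c) := by
  classical
  set cs : ℕ → ℝ := fun k => 2 / (A : ℝ) ^ k * ∑ w : Word A k, Real.log (cfVal (toList w))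
    with hcs
  set M : ℝ := Real.log ((A:ℝ)+1) with hM
  have hM0 : 0 ≤ M := Real.log_nonneg (by push_cast; linarith [Nat.zero_le A])
  have hA0 : ((A:ℝ)) ≠ 0 := by positivity
  have cardWk : ∀ k : ℕ, (Fintype.card (Word A k) : ℝ) = (A:ℝ)^k := by
    intro k
    rw [Fintype.card_fun, Fintype.card_fin, Fintype.card_fin]
    push_cast
    rfl
  set CC : ℝ := 2*M + 2*((A:ℝ)+1) * (rr A)⁻¹ * (rr A)⁻¹ with hCC
  have hdist : ∀ n : ℕ, dist (cs n) (cs (n+1)) ≤ CC * (rr A) ^ n := by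
    intro n
    rcases Nat.eq_zero_or_pos n with rfl | hn
    · -- n = 0
      have hcs0 : cs 0 = 0 := by
        rw [hcs]
        simp only [pow_zero, div_one]
        have : ∀ w : Word A 0, Real.log (cfVal (toList w)) = 0 := by
          intro w
          have : toList w = [] := by
            rw [toList]
            exact List.ofFn_zero
          rw [this]
          simp [cfVal, Real.log_zero]
        rw [Finset.sum_congr rfl (fun w _ => this w)]
        simp
      have hcs1 : |cs 1| ≤ 2 * M := by
        rw [hcs]
        simp only
        rw [abs_mul]
        have h1 : |2 / (A:ℝ)^1| = 2/(A:ℝ) := by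
          rw [abs_of_pos]
          · rw [pow_one]
          · positivity
        have h2 : |∑ w : Word A 1, Real.log (cfVal (toList w))| ≤ (A:ℝ) * M := by
          calc |∑ w : Word A 1, Real.log (cfVal (toList w))|
              ≤ ∑ w : Word A 1, |Real.log (cfVal (toList w))| :=
                Finset.abs_sum_le_sum_abs _ _
            _ ≤ ∑ _w : Word A 1, M := by
                apply Finset.sum_le_sum
                intro w _
                obtain ⟨hb1, hb2⟩ := log_word_bounds (le_refl 1) w
                rw [abs_of_nonneg hb1]
                exact hb2
            _ = (A:ℝ) * M := by
                rw [Finset.sum_const, nsmul_eq_mul, Finset.card_univ, cardWk, pow_one]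
        rw [h1]
        calc 2/(A:ℝ) * |∑ w : Word A 1, Real.log (cfVal (toList w))|
            ≤ 2/(A:ℝ) * ((A:ℝ) * M) := by
              apply mul_le_mul_of_nonneg_left h2 (by positivity)
          _ = 2 * M := by field_simp
      rw [Real.dist_eq, pow_zero, mul_one, hcs0, zero_sub, abs_neg]
      have : 0 ≤ 2*((A:ℝ)+1) * (rr A)⁻¹ * (rr A)⁻¹ := by
        have := rr_pos A
        positivity
      calc |cs 1| ≤ 2*M := hcs1
        _ ≤ CC := by rw [hCC]; linarith
    · -- n ≥ 1
      obtain ⟨m, rfl⟩ : ∃ m, n = m + 1 := ⟨n - 1, by omega⟩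
      -- prefix map
      have key : ∀ w : Word A (m+2), |Real.log (cfVal (toList w))
          - Real.log (cfVal (toList (fun t : Fin (m+1) => w t.castSucc)))| ≤ dd A (m+1) := by
        intro w
        have hsplit : toList w
            = toList (fun t : Fin (m+1) => w t.castSucc) ++ [letter w (Fin.last (m+1))] := by
          rw [toList, toList, List.ofFn_succ', List.concat_eq_append]
          rfl
        have hgood : GoodL A (toList (fun t : Fin (m+1) => w t.castSucc)) := goodL_toList _
        have hne : toList (fun t : Fin (m+1) => w t.castSucc) ≠ [] :=
          toList_ne_nil (by omega) _
        have hb1 : (1:ℝ) ≤ (letter w (Fin.last (m+1)) : ℝ) := by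
          have : 1 ≤ letter w (Fin.last (m+1)) := Nat.le_add_left 1 _
          exact_mod_cast this
        have hb2 : ((letter w (Fin.last (m+1)) : ℕ) : ℝ) ≤ (A:ℝ) + 1 := by
          have : letter w (Fin.last (m+1)) ≤ A := (w (Fin.last (m+1))).isLt
          have h2 : ((letter w (Fin.last (m+1)) : ℕ) : ℝ) ≤ (A:ℝ) := by exact_mod_cast this
          linarith
        have hsub := valExt_sub_cfVal hgood hne hb1 hb2
        rw [← cfVal_concat, ← hsplit] at hsub
        have hlen : (toList (fun t : Fin (m+1) => w t.castSucc)).length = m+1 :=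
          length_toList _
        rw [hlen] at hsub
        have hpv1 := (one_le_cfVal_word (n := m+2) (by omega) w).1
        have hpv2 := (one_le_cfVal_word (n := m+1) (by omega) (fun t : Fin (m+1) => w t.castSucc)).1
        calc |Real.log (cfVal (toList w))
            - Real.log (cfVal (toList (fun t : Fin (m+1) => w t.castSucc)))|
            ≤ |cfVal (toList w) - cfVal (toList (fun t : Fin (m+1) => w t.castSucc))| :=
              abs_log_sub_log_le hpv1 hpv2
          _ ≤ rr A ^ (m+1) * (rr A)⁻¹ * (rr A)⁻¹ := hsub
          _ ≤ dd A (m+1) := by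
              rw [dd]
              have h1 : (0:ℝ) ≤ rr A ^ (m+1) * (rr A)⁻¹ * (rr A)⁻¹ := by
                have := rr_pos A
                positivity
              nlinarith [(by exact_mod_cast Nat.zero_le A : (0:ℝ) ≤ (A:ℝ))]
      -- sum over prefixes
      have hpref : ∑ α : Word A (m+2),
          Real.log (cfVal (toList (fun t : Fin (m+1) => α t.castSucc)))
          = (A:ℝ) * ∑ w : Word A (m+1), Real.log (cfVal (toList w)) := by
        have := sum_comp_inj (A := A) (N := m+2) (Fin.castSucc : Fin (m+1) → Fin (m+2))
          (Fin.castSucc_injective _) (fun w => Real.log (cfVal (toList w)))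
        rw [Fintype.card_fin] at this
        rw [this]
        congr 1
        have : m + 2 - (m+1) = 1 := by omega
        rw [this, pow_one]
      have hcsm : cs (m+1) = 2 / (A:ℝ)^(m+2) * ∑ α : Word A (m+2),
          Real.log (cfVal (toList (fun t : Fin (m+1) => α t.castSucc))) := by
        rw [hcs]
        simp only
        rw [hpref]
        rw [pow_succ]
        field_simp
        ring
      rw [Real.dist_eq, hcsm]
      have hcsm2 : cs (m+1+1) = 2 / (A:ℝ)^(m+2) * ∑ α : Word A (m+2),
          Real.log (cfVal (toList α)) := rfl
      rw [hcsm2, ← mul_sub, ← Finset.sum_sub_distrib, abs_mul]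
      have habs2 : |∑ α : Word A (m+2), (Real.log (cfVal (toList (fun t : Fin (m+1) => α t.castSucc)))
          - Real.log (cfVal (toList α)))| ≤ (A:ℝ)^(m+2) * dd A (m+1) := by
        calc |∑ α : Word A (m+2), (Real.log (cfVal (toList (fun t : Fin (m+1) => α t.castSucc)))
            - Real.log (cfVal (toList α)))|
            ≤ ∑ α : Word A (m+2), |Real.log (cfVal (toList (fun t : Fin (m+1) => α t.castSucc)))
              - Real.log (cfVal (toList α))| := Finset.abs_sum_le_sum_abs _ _
          _ ≤ ∑ _α : Word A (m+2), dd A (m+1) := by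
              apply Finset.sum_le_sum
              intro α _
              rw [abs_sub_comm]
              exact key α
          _ = (A:ℝ)^(m+2) * dd A (m+1) := by
              rw [Finset.sum_const, nsmul_eq_mul, Finset.card_univ, cardWk]
      have h2A : |2 / (A:ℝ)^(m+2)| = 2 / (A:ℝ)^(m+2) := abs_of_pos (by positivity)
      rw [h2A]
      calc 2 / (A:ℝ)^(m+2) * |∑ α : Word A (m+2),
            (Real.log (cfVal (toList (fun t : Fin (m+1) => α t.castSucc)))
            - Real.log (cfVal (toList α)))|
          ≤ 2 / (A:ℝ)^(m+2) * ((A:ℝ)^(m+2) * dd A (m+1)) := by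
            apply mul_le_mul_of_nonneg_left habs2 (by positivity)
        _ = 2 * dd A (m+1) := by field_simp
        _ ≤ CC * rr A ^ (m+1) := by
            rw [hCC, dd]
            have h1 : 0 ≤ rr A ^ (m+1) := (pow_pos (rr_pos A) _).le
            nlinarith [mul_nonneg (mul_nonneg h1 (inv_pos.2 (rr_pos A)).le)
              (inv_pos.2 (rr_pos A)).le, hM0]
  have hcauchy : CauchySeq cs := cauchySeq_of_le_geometric (rr A) CC (rr_lt_one A) hdist
  exact cauchySeq_tendsto_of_complete hcauchy


lemma dd_tendsto (A : ℕ) : Tendsto (fun k => dd A k) atTop (nhds 0) := by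
  have h1 : Tendsto (fun k : ℕ => rr A ^ k) atTop (nhds 0) :=
    tendsto_pow_atTop_nhds_zero_of_lt_one (rr_pos A).le (rr_lt_one A)
  have h2 : Tendsto (fun k : ℕ => ((A:ℝ)+1) * (rr A ^ k * (rr A)⁻¹ * (rr A)⁻¹)) atTop
      (nhds (((A:ℝ)+1) * (0 * (rr A)⁻¹ * (rr A)⁻¹))) :=
    (((h1.mul_const _).mul_const _).const_mul _)
  simpa [dd] using h2

open Finset in
theorem stmt16' (A : ℕ) (hA : 1 < A) :
    ∃ c : ℝ,
      (∀ ε : ℝ, 0 < ε →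
        Tendsto
          (fun N : ℕ =>
            (Nat.card {α : Word A N //
                ε < |2 / (N : ℝ) * ∑ j : Fin N, Real.log (Tpow α (j.1 + 1)) - c|} : ℝ) /
              (A : ℝ) ^ N)
          atTop (nhds 0)) ∧
      Tendsto
        (fun k : ℕ => 2 / (A : ℝ) ^ k * ∑ w : Word A k, Real.log (cfVal (toList w)))
        atTop (nhds c) := by
  classical
  have hA0 : 0 < A := by omega
  obtain ⟨c, hc⟩ := cs_exists A hA0
  refine ⟨c, ?_, hc⟩
  intro ε hε
  set M : ℝ := Real.log ((A:ℝ)+1) with hM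
  have hM0 : 0 ≤ M := Real.log_nonneg (by push_cast; linarith [Nat.zero_le A])
  -- choose k
  have hev : ∀ᶠ k : ℕ in atTop, (1 ≤ k ∧ dd A k < ε/8) ∧
      |2 / (A : ℝ) ^ k * ∑ w : Word A k, Real.log (cfVal (toList w)) - c| < ε/4 := by
    have e1 : ∀ᶠ k : ℕ in atTop, 1 ≤ k := eventually_ge_atTop 1
    have e2 : ∀ᶠ k : ℕ in atTop, dd A k < ε/8 :=
      (dd_tendsto A).eventually (gt_mem_nhds (by positivity))
    have e3 : ∀ᶠ k : ℕ in atTop,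
        |2 / (A : ℝ) ^ k * ∑ w : Word A k, Real.log (cfVal (toList w)) - c| < ε/4 := by
      have := hc.eventually (Metric.ball_mem_nhds c (show (0:ℝ) < ε/4 by positivity))
      filter_upwards [this] with k hk
      rw [← Real.dist_eq]
      exact hk
    exact (e1.and e2).and e3
  obtain ⟨k, ⟨⟨hk1, hkdd⟩, hkc⟩⟩ := hev.exists
  set KK : ℝ := 32 * (k:ℝ) * M^2 / ε^2 with hKK
  -- squeeze
  refine tendsto_of_tendsto_of_tendsto_of_le_of_le' tendsto_const_nhds
    (tendsto_const_div_atTop_nhds_zero_nat KK) ?_ ?_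
  · filter_upwards with N
    positivity
  · filter_upwards [eventually_ge_atTop (2*k)] with N h2k
    have hN : 0 < N := by omega
    have hkN : k ≤ N := by omega
    have hNR : (0:ℝ) < (N:ℝ) := by exact_mod_cast hN
    set μ : ℝ := (∑ w : Word A k, Real.log (cfVal (toList w))) / (A:ℝ)^k with hμ
    set Y : Word A N → ℝ :=
      fun α => ∑ j : Fin N, Real.log (cfVal (toList (win k (j.1+1) hN α))) with hY
    set t : ℝ := (N:ℝ) * ε / 4 with ht
    have ht0 : 0 < t := by rw [ht]; positivity
    -- deterministic part : bad α satisfy the Chebyshev event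
    have hdet : ∀ α : Word A N,
        ε < |2 / (N : ℝ) * ∑ j : Fin N, Real.log (Tpow α (j.1 + 1)) - c| →
        t < |Y α - (N:ℝ) * μ| := by
      intro α hbad
      by_contra hsmall
      push_neg at hsmall
      apply absurd hbad
      push_neg
      have step1 : |2 / (N:ℝ) * Y α - 2 * μ| ≤ ε/2 := by
        have e : 2 / (N:ℝ) * Y α - 2 * μ = 2 / (N:ℝ) * (Y α - (N:ℝ)*μ) := by
          field_simp
        rw [e, abs_mul, abs_of_pos (by positivity : (0:ℝ) < 2/(N:ℝ))]
        calc 2/(N:ℝ) * |Y α - (N:ℝ)*μ| ≤ 2/(N:ℝ) * t :=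
              mul_le_mul_of_nonneg_left hsmall (by positivity)
          _ = ε/2 := by rw [ht]; field_simp; ring
      have step2 : |2 / (N:ℝ) * ∑ j : Fin N, Real.log (Tpow α (j.1 + 1))
          - 2 / (N:ℝ) * Y α| ≤ 2 * dd A k := by
        rw [← mul_sub, ← Finset.sum_sub_distrib, abs_mul,
          abs_of_pos (by positivity : (0:ℝ) < 2/(N:ℝ))]
        calc 2/(N:ℝ) * |∑ j : Fin N, (Real.log (Tpow α (j.1+1))
              - Real.log (cfVal (toList (win k (j.1+1) hN α))))|
            ≤ 2/(N:ℝ) * ∑ j : Fin N, |Real.log (Tpow α (j.1+1))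
              - Real.log (cfVal (toList (win k (j.1+1) hN α)))| :=
              mul_le_mul_of_nonneg_left (Finset.abs_sum_le_sum_abs _ _) (by positivity)
          _ ≤ 2/(N:ℝ) * ∑ _j : Fin N, dd A k := by
              apply mul_le_mul_of_nonneg_left _ (by positivity)
              apply Finset.sum_le_sum
              intro j _
              exact log_Tpow_sub hN hk1 hkN α (j.1+1)
          _ = 2 * dd A k := by
              rw [Finset.sum_const, nsmul_eq_mul, Finset.card_univ, Fintype.card_fin]
              field_simp
      have step3 : |2 / (N:ℝ) * Y α - c| ≤ ε/2 + ε/4 := by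
        have hkc' : |2*μ - c| < ε/4 := by
          have e2μ : (2:ℝ) * μ = 2 / (A : ℝ) ^ k * ∑ w : Word A k, Real.log (cfVal (toList w)) := by
            rw [hμ]; ring
          rw [e2μ]
          exact hkc
        calc |2 / (N:ℝ) * Y α - c| ≤ |2 / (N:ℝ) * Y α - 2*μ| + |2*μ - c| := abs_sub_le _ _ _
          _ ≤ ε/2 + ε/4 := add_le_add step1 hkc'.le
      calc |2 / (N : ℝ) * ∑ j : Fin N, Real.log (Tpow α (j.1 + 1)) - c|
          ≤ |2 / (N:ℝ) * ∑ j : Fin N, Real.log (Tpow α (j.1 + 1)) - 2 / (N:ℝ) * Y α|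
            + |2 / (N:ℝ) * Y α - c| := abs_sub_le _ _ _
        _ ≤ 2 * dd A k + (ε/2 + ε/4) := add_le_add step2 step3
        _ ≤ ε := by linarith
    -- counting
    have hcard1 : (Nat.card {α : Word A N //
        ε < |2 / (N : ℝ) * ∑ j : Fin N, Real.log (Tpow α (j.1 + 1)) - c|} : ℝ)
        ≤ ((univ.filter (fun α : Word A N => t < |Y α - (N:ℝ)*μ|)).card : ℝ) := by
      rw [Nat.card_eq_fintype_card, Fintype.card_subtype]
      have : (univ.filter (fun α : Word A N =>
          ε < |2 / (N : ℝ) * ∑ j : Fin N, Real.log (Tpow α (j.1 + 1)) - c|))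
          ⊆ (univ.filter (fun α : Word A N => t < |Y α - (N:ℝ)*μ|)) := by
        intro α hα
        rw [Finset.mem_filter] at hα ⊢
        exact ⟨hα.1, hdet α hα.2⟩
      exact_mod_cast Finset.card_le_card this
    have hcheb := cheb_count Y ((N:ℝ)*μ) t ht0
      (fun α : Word A N => t < |Y α - (N:ℝ)*μ|) (fun b hb => hb)
    have hrw : ∑ α : Word A N, (Y α - (N:ℝ)*μ)^2
        = ∑ α : Word A N, ((∑ j : Fin N, (Real.log (cfVal (toList (win k (j.1+1) hN α)))
          - (∑ w : Word A k, Real.log (cfVal (toList w))) / (A:ℝ)^k)))^2 := by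
      apply Finset.sum_congr rfl
      intro α _
      congr 1
      rw [hY, Finset.sum_sub_distrib, Finset.sum_const, nsmul_eq_mul,
        Finset.card_univ, Fintype.card_fin, ← hμ]
    have hvar := variance_bound (A := A) hA0 hN hk1 h2k
    have hcheb2 : ((univ.filter (fun α : Word A N => t < |Y α - (N:ℝ)*μ|)).card : ℝ) * t^2
        ≤ (N:ℝ) * (2*k) * (A:ℝ)^N * M^2 := by
      calc ((univ.filter (fun α : Word A N => t < |Y α - (N:ℝ)*μ|)).card : ℝ) * t^2
          ≤ ∑ α : Word A N, (Y α - (N:ℝ)*μ)^2 := hcheb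
        _ = _ := hrw
        _ ≤ (N:ℝ) * (2*k) * (A:ℝ)^N * M^2 := hvar
    have hApow : (0:ℝ) < (A:ℝ)^N := by positivity
    rw [div_le_div_iff₀ hApow hNR]
    calc (Nat.card {α : Word A N //
          ε < |2 / (N : ℝ) * ∑ j : Fin N, Real.log (Tpow α (j.1 + 1)) - c|} : ℝ) * (N:ℝ)
        ≤ ((univ.filter (fun α : Word A N => t < |Y α - (N:ℝ)*μ|)).card : ℝ) * (N:ℝ) :=
          mul_le_mul_of_nonneg_right hcard1 hNR.le
      _ ≤ KK * (A:ℝ)^N := by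
          have h1 : ((univ.filter (fun α : Word A N => t < |Y α - (N:ℝ)*μ|)).card : ℝ)
              ≤ (N:ℝ) * (2*k) * (A:ℝ)^N * M^2 / t^2 := by
            rw [le_div_iff₀ (by positivity)]
            exact hcheb2
          calc ((univ.filter (fun α : Word A N => t < |Y α - (N:ℝ)*μ|)).card : ℝ) * (N:ℝ)
              ≤ ((N:ℝ) * (2*k) * (A:ℝ)^N * M^2 / t^2) * (N:ℝ) :=
                mul_le_mul_of_nonneg_right h1 hNR.le
            _ = KK * (A:ℝ)^N := by
                rw [hKK, ht]
                field_simp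
                ring


-- STATEMENT 16
theorem stmt16 (A : ℕ) (hA : 1 < A) :
    ∃ c : ℝ,
      (∀ ε : ℝ, 0 < ε →
        Tendsto
          (fun N : ℕ =>
            (Nat.card {α : Word A N //
                ε < |2 / (N : ℝ) * ∑ j : Fin N, Real.log (Tpow α (j.1 + 1)) - c|} : ℝ) /
              (A : ℝ) ^ N)
          atTop (nhds 0)) ∧
      Tendsto
        (fun k : ℕ => 2 / (A : ℝ) ^ k * ∑ w : Word A k, Real.log (cfVal (toList w)))
        atTop (nhds c) := by
  exact stmt16' A hA

end Winding
end
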